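/- arXiv:1611.05921 — 5 statements merged into one kernel-verified Lean document; each statement's English description precedes it below -/
import Mathlib

section
/- Let n > 2 and let H be a subgroup of SL(n,ℤ) of level M, and suppose Γ_{n,m} ≤ H for some m ≥ 1. Then every prime p for which φ_p(H) is a proper subgroup of SL(n,ℤ/pℤ) divides M, and every prime dividing M divides m. -/
open Matrix

theorem SL1aux.tv_mul {n' : Type*} [Fintype n'] [DecidableEq n'] (R : Type*) [CommRing R]
    (i j : n') (c : R) (A : Matrix n' n' R) :
    Matrix.transvection i j c * A = A.updateRow i (A i + c • A j) := by
  ext a b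
  rcases eq_or_ne a i with rfl | ha
  · simp [Matrix.transvection_mul_apply_same]
  · simp [Matrix.transvection_mul_apply_of_ne _ _ _ _ ha, ha]

theorem SL1aux.whitehead {n' : Type*} [Fintype n'] [DecidableEq n'] {F : Type*} [Field F]
    {i j : n'} (hij : i ≠ j) {u : F} (hu : u ≠ 0) :
    Matrix.diagonal (fun k => if k = i then u else if k = j then u⁻¹ else 1) =
      transvection i j u * (transvection j i (-u⁻¹) * (transvection i j u *
        (transvection i j (-1) * (transvection j i 1 * transvection i j (-1))))) := by
  rw [SL1aux.tv_mul, SL1aux.tv_mul, SL1aux.tv_mul, SL1aux.tv_mul, SL1aux.tv_mul]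
  ext a b
  simp only [Matrix.updateRow_apply, Matrix.transvection, Matrix.one_apply,
    Matrix.diagonal_apply, Matrix.add_apply, Pi.add_apply, Pi.smul_apply, smul_eq_mul,
    Matrix.single_apply_same, Matrix.single]
  simp only [Matrix.of_apply, hij, hij.symm, if_false, ite_and]
  split_ifs <;> simp_all

theorem SL1aux.map_transvection {n' : Type*} [DecidableEq n'] {R S : Type*} [CommRing R]
    [CommRing S] (f : R →+* S) (i j : n') (c : R) :
    (Matrix.transvection i j c).map f = Matrix.transvection i j (f c) := by
  ext a b
  simp [Matrix.transvection, Matrix.single, Matrix.one_apply, apply_ite f]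

/-- The reduction-mod-`m` homomorphism `φ_m : SL(n,ℤ) → SL(n, ℤ/mℤ)`. -/
def SLmod (n m : ℕ) :
    Matrix.SpecialLinearGroup (Fin n) ℤ →* Matrix.SpecialLinearGroup (Fin n) (ZMod m) :=
  Matrix.SpecialLinearGroup.map (Int.castRingHom (ZMod m))

theorem SL1aux.key (n : ℕ) (p M : ℕ) (hp : p.Prime) (hpM : ¬ p ∣ M)
    (H : Subgroup (Matrix.SpecialLinearGroup (Fin n) ℤ))
    (hker : (SLmod n M).ker ≤ H) :
    Subgroup.map (SLmod n p) H = ⊤ := by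
  haveI : Fact p.Prime := ⟨hp⟩
  set K := Subgroup.map (SLmod n p) H with hK
  have hcoe : ∀ (m : ℕ) (g : Matrix.SpecialLinearGroup (Fin n) ℤ),
      ((SLmod n m g : Matrix.SpecialLinearGroup (Fin n) (ZMod m)) :
        Matrix (Fin n) (Fin n) (ZMod m))
        = (g : Matrix (Fin n) (Fin n) ℤ).map (Int.castRingHom (ZMod m)) := fun m g => rfl
  -- transvections are in K, with lift in the kernel of reduction mod M
  have htv : ∀ (i j : Fin n), i ≠ j → ∀ c : ZMod p,
      ∃ s ∈ K, (s : Matrix (Fin n) (Fin n) (ZMod p)) = transvection i j c := by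
    intro i j hij c
    obtain ⟨c₀, rfl⟩ := ZMod.intCast_surjective c
    have hco : IsCoprime (M : ℤ) (p : ℤ) :=
      Nat.isCoprime_iff_coprime.mpr ((hp.coprime_iff_not_dvd.mpr hpM).symm)
    obtain ⟨a, b, hab⟩ := hco
    set c' : ℤ := c₀ * (a * M) with hc'
    have hdet : (transvection i j c').det = 1 := det_transvection_of_ne i j hij c'
    set g : Matrix.SpecialLinearGroup (Fin n) ℤ := ⟨transvection i j c', hdet⟩ with hg
    have hmap : ∀ m : ℕ,
        ((SLmod n m g : Matrix.SpecialLinearGroup (Fin n) (ZMod m)) :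
          Matrix (Fin n) (Fin n) (ZMod m)) = transvection i j ((c' : ZMod m)) := by
      intro m
      rw [hcoe]
      exact SL1aux.map_transvection (Int.castRingHom (ZMod m)) i j c'
    have hgH : g ∈ H := by
      apply hker
      rw [MonoidHom.mem_ker]
      apply Subtype.ext
      rw [hmap M]
      have : ((c' : ℤ) : ZMod M) = 0 := by
        rw [hc']
        push_cast
        simp [ZMod.natCast_self]
      rw [this, transvection_zero]
      rfl
    refine ⟨SLmod n p g, ⟨g, hgH, rfl⟩, ?_⟩
    rw [hmap p]
    congr 1
    have h1 : ((a * (M : ℤ) : ℤ) : ZMod p) = 1 := by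
      have := congrArg (fun x : ℤ => (x : ZMod p)) hab
      push_cast at this
      simpa [ZMod.natCast_self] using this
    rw [hc']
    push_cast
    push_cast at h1
    rw [h1, mul_one]
  -- diagonal matrices of determinant one are values of K
  have hdiag : ∀ (s : Finset (Fin n)) (d : (Fin n) → ZMod p), (∀ k, d k ≠ 0) →
      (∀ k ∉ s, d k = 1) → ∏ k ∈ s, d k = 1 →
      ∃ t ∈ K, (t : Matrix (Fin n) (Fin n) (ZMod p)) = diagonal d := by
    intro s
    induction s using Finset.induction_on with
    | empty =>
      intro d h0 h1 hprod
      have hd : d = fun _ => 1 := funext fun k => h1 k (by simp)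
      exact ⟨1, K.one_mem, by simp [hd]⟩
    | @insert i t hit IH =>
      intro d h0 hsupp hprod
      rw [Finset.prod_insert hit] at hprod
      rcases t.eq_empty_or_nonempty with rfl | ⟨j, hj⟩
      · have hdi : d i = 1 := by simpa using hprod
        have hd : d = fun _ => 1 := funext fun k => by
          rcases eq_or_ne k i with rfl | hk
          · exact hdi
          · exact hsupp k (by simp [hk])
        exact ⟨1, K.one_mem, by simp [hd]⟩
      · have hij : i ≠ j := fun h => hit (h ▸ hj)
        set u := d i with hu
        have hu0 : u ≠ 0 := h0 i
        set e : Fin n → ZMod p := fun k => if k = i then u else if k = j then u⁻¹ else 1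
          with he
        set d' : Fin n → ZMod p := Function.update (Function.update d i 1) j (u * d j)
          with hd'
        -- d = e * d'
        have hdd : d = fun k => e k * d' k := by
          funext k
          rcases eq_or_ne k i with rfl | hki
          · simp [he, hd', Function.update_apply, hij, hu]
          · rcases eq_or_ne k j with rfl | hkj
            · have h1 : e k = u⁻¹ := by simp [he, hki]
              have h2 : d' k = u * d k := by simp [hd']
              rw [h1, h2, ← mul_assoc, inv_mul_cancel₀ hu0, one_mul]
            · simp [he, hd', Function.update_apply, hki, hkj]
        -- diagonal e ∈ K (Whitehead)
        obtain ⟨s1, hs1, hv1⟩ := htv i j hij u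
        obtain ⟨s2, hs2, hv2⟩ := htv j i hij.symm (-u⁻¹)
        obtain ⟨s3, hs3, hv3⟩ := htv i j hij u
        obtain ⟨s4, hs4, hv4⟩ := htv i j hij (-1)
        obtain ⟨s5, hs5, hv5⟩ := htv j i hij.symm 1
        obtain ⟨s6, hs6, hv6⟩ := htv i j hij (-1)
        have hemem : ∃ te ∈ K, (te : Matrix (Fin n) (Fin n) (ZMod p)) = diagonal e := by
          refine ⟨s1 * (s2 * (s3 * (s4 * (s5 * s6)))),
            K.mul_mem hs1 (K.mul_mem hs2 (K.mul_mem hs3 (K.mul_mem hs4 (K.mul_mem hs5 hs6)))),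
            ?_⟩
          rw [he, SL1aux.whitehead hij hu0]
          simp only [Matrix.SpecialLinearGroup.coe_mul, hv1, hv2, hv3, hv4, hv5, hv6]
        obtain ⟨te, hteK, htev⟩ := hemem
        -- d' satisfies the induction hypothesis
        have h0' : ∀ k, d' k ≠ 0 := by
          intro k
          rw [hd']
          by_cases hkj : k = j
          · rw [hkj, Function.update_self]
            exact mul_ne_zero hu0 (h0 j)
          · rw [Function.update_of_ne hkj]
            by_cases hki : k = i
            · rw [hki, Function.update_self]
              exact one_ne_zero
            · rw [Function.update_of_ne hki]
              exact h0 k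
        have hsupp' : ∀ k ∉ t, d' k = 1 := by
          intro k hk
          have hkj : k ≠ j := fun h => hk (h ▸ hj)
          rcases eq_or_ne k i with rfl | hki
          · simp [hd', Function.update_apply, hkj]
          · have : k ∉ insert i t := by simp [hki, hk]
            simp [hd', Function.update_apply, hkj, hki, hsupp k this]
        have hprod' : ∏ k ∈ t, d' k = 1 := by
          rw [hd', Finset.prod_update_of_mem hj]
          have : ∏ k ∈ t.erase j, Function.update d i (1 : ZMod p) k
              = ∏ k ∈ t.erase j, d k := by
            apply Finset.prod_congr rfl
            intro k hk
            have : k ≠ i := fun h => hit (h ▸ (Finset.mem_of_mem_erase hk))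
            simp [Function.update_apply, this]
          rw [Finset.sdiff_singleton_eq_erase, this, mul_assoc,
            Finset.mul_prod_erase t d hj]
          exact hprod
        obtain ⟨td, htdK, htdv⟩ := IH d' h0' hsupp' hprod'
        refine ⟨te * td, K.mul_mem hteK htdK, ?_⟩
        rw [Matrix.SpecialLinearGroup.coe_mul, htev, htdv, diagonal_mul_diagonal, hdd]
  -- conclude via the transvection/diagonal induction principle
  rw [eq_top_iff]
  intro g _
  have : ∃ s ∈ K, (s : Matrix (Fin n) (Fin n) (ZMod p)) = (g : Matrix (Fin n) (Fin n) (ZMod p)) := by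
    apply diagonal_transvection_induction
      (fun A => ∃ s ∈ K, (s : Matrix (Fin n) (Fin n) (ZMod p)) = A)
    · intro D hD
      rw [g.2, det_diagonal] at hD
      refine hdiag Finset.univ D ?_ (by simp) hD
      intro k h
      rw [Finset.prod_eq_zero (Finset.mem_univ k) h] at hD
      exact zero_ne_one hD
    · rintro ⟨i, j, hij, c⟩
      rw [Matrix.TransvectionStruct.toMatrix_mk]
      exact htv i j hij c
    · rintro A B ⟨sA, hsA, rfl⟩ ⟨sB, hsB, rfl⟩
      exact ⟨sA * sB, K.mul_mem hsA hsB, by simp⟩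
  obtain ⟨s, hs, hv⟩ := this
  have : s = g := Subtype.ext hv
  exact this ▸ hs

/-- If `H ≤ SL(n,ℤ)` has level `M` and `Γ_{n,m} ≤ H`, then every prime `p` with
`φ_p(H) ≠ SL(n, ℤ/pℤ)` divides `M`, and every prime dividing `M` divides `m`. -/
theorem stmt1 (n : ℕ) (hn : 2 < n) (H : Subgroup (Matrix.SpecialLinearGroup (Fin n) ℤ))
    (M : ℕ) (hM : 1 ≤ M) (hlev1 : (SLmod n M).ker ≤ H)
    (hlev2 : ∀ m' : ℕ, 1 ≤ m' → (SLmod n m').ker ≤ H → M ∣ m')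
    (m : ℕ) (hm : 1 ≤ m) (hker : (SLmod n m).ker ≤ H) :
    (∀ p : ℕ, p.Prime → Subgroup.map (SLmod n p) H ≠ ⊤ → p ∣ M) ∧
      (∀ p : ℕ, p.Prime → p ∣ M → p ∣ m) := by
  constructor
  · intro p hp hne
    by_contra hpM
    exact hne (SL1aux.key n p M hp hpM H hlev1)
  · intro p hp hpM
    exact hpM.trans (hlev2 m hm hker)
end

section
/- Let p be a prime, a ≥ 2, and n ≥ 2. An element g of SL(n, ℤ/p^aℤ) lies in the kernel of ψ_{a,a-1} : SL(n, ℤ/p^aℤ) → SL(n, ℤ/p^{a-1}ℤ) if and only if there exists an integer matrix x of size n×n with trace(x) ≡ 0 (mod p) such that the underlying matrix of g equals 1 + (p^{a-1} : ℤ/p^aℤ) • (the entrywise reduction of x modulo p^a). -/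
/-- The reduction homomorphism `ψ_{a,b} : SL(n, ℤ/p^aℤ) → SL(n, ℤ/p^bℤ)` for `b ≤ a`. -/
def SLpow (n p a b : ℕ) (h : b ≤ a) :
    Matrix.SpecialLinearGroup (Fin n) (ZMod (p ^ a)) →*
      Matrix.SpecialLinearGroup (Fin n) (ZMod (p ^ b)) :=
  Matrix.SpecialLinearGroup.map (ZMod.castHom (pow_dvd_pow p h) (ZMod (p ^ b)))

/-- An element `g ∈ SL(n, ℤ/p^aℤ)` lies in the kernel of `ψ_{a,a-1}` iff its underlying
matrix is `1 + p^{a-1} • x̄` for an integer matrix `x` with `trace(x) ≡ 0 (mod p)`. -/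
theorem stmt2 (p : ℕ) (hp : p.Prime) (a : ℕ) (ha : 2 ≤ a) (n : ℕ) (hn : 2 ≤ n)
    (g : Matrix.SpecialLinearGroup (Fin n) (ZMod (p ^ a))) :
    g ∈ (SLpow n p a (a - 1) (Nat.sub_le a 1)).ker ↔
      ∃ x : Matrix (Fin n) (Fin n) ℤ, ((x.trace : ℤ) : ZMod p) = 0 ∧
        (g : Matrix (Fin n) (Fin n) (ZMod (p ^ a))) =
          1 + ((p ^ (a - 1) : ℕ) : ZMod (p ^ a)) • x.map (Int.cast : ℤ → ZMod (p ^ a)) := by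
  haveI : NeZero (p ^ a) := ⟨pow_ne_zero a hp.ne_zero⟩
  haveI : NeZero (p ^ (a - 1)) := ⟨pow_ne_zero _ hp.ne_zero⟩
  set f := ZMod.castHom (pow_dvd_pow p (Nat.sub_le a 1)) (ZMod (p ^ (a - 1))) with hf
  set c : ZMod (p ^ a) := ((p ^ (a - 1) : ℕ) : ZMod (p ^ a)) with hc
  have hc2 : c ^ 2 = 0 := by
    rw [hc, ← Nat.cast_pow, ZMod.natCast_eq_zero_iff]
    rw [← pow_mul]
    exact pow_dvd_pow p (by omega)
  constructor
  · intro hg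
    rw [MonoidHom.mem_ker] at hg
    have hmat : (g : Matrix (Fin n) (Fin n) (ZMod (p ^ a))).map f = 1 := by
      have h2 := Subtype.ext_iff.mp hg
      simpa [SLpow, Matrix.SpecialLinearGroup.map_apply_coe] using h2
    -- each entry of g - 1 is divisible by p^(a-1)
    have hdvd : ∀ i j, p ^ (a - 1) ∣
        (((g : Matrix (Fin n) (Fin n) (ZMod (p ^ a))) - 1) i j).val := by
      intro i j
      rw [← ZMod.natCast_eq_zero_iff, ZMod.natCast_val, ← ZMod.castHom_apply
        (h := pow_dvd_pow p (Nat.sub_le a 1))]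
      have : f (((g : Matrix (Fin n) (Fin n) (ZMod (p ^ a))) - 1) i j) =
          ((g : Matrix (Fin n) (Fin n) (ZMod (p ^ a))).map f - 1) i j := by
        simp [Matrix.sub_apply, Matrix.map_apply, Matrix.one_apply, apply_ite f]
      rw [← hf, this, hmat, sub_self, Matrix.zero_apply]
    set x : Matrix (Fin n) (Fin n) ℤ := Matrix.of fun i j =>
      (((((g : Matrix (Fin n) (Fin n) (ZMod (p ^ a))) - 1) i j).val / p ^ (a - 1) : ℕ) : ℤ)
      with hx
    have hcx : ∀ i j, c * ((x i j : ℤ) : ZMod (p ^ a)) =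
        (((g : Matrix (Fin n) (Fin n) (ZMod (p ^ a))) - 1) i j) := by
      intro i j
      rw [hx]
      simp only [Matrix.of_apply, Int.cast_natCast]
      rw [hc, ← Nat.cast_mul, Nat.mul_div_cancel' (hdvd i j), ZMod.natCast_val, ZMod.cast_id]
    have hmateq : (g : Matrix (Fin n) (Fin n) (ZMod (p ^ a))) =
        1 + c • x.map (Int.cast : ℤ → ZMod (p ^ a)) := by
      ext i j
      rw [Matrix.add_apply, Matrix.smul_apply, Matrix.map_apply, smul_eq_mul, hcx i j,
        Matrix.sub_apply]
      ring
    refine ⟨x, ?_, hmateq⟩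
    -- trace condition from det = 1
    have htr : Matrix.trace (x.map (Int.cast : ℤ → ZMod (p ^ a))) =
        ((x.trace : ℤ) : ZMod (p ^ a)) := by
      simp [Matrix.trace, Matrix.diag, Matrix.map_apply]
    have hdet : (g : Matrix (Fin n) (Fin n) (ZMod (p ^ a))).det = 1 := g.prop
    rw [hmateq, Matrix.det_one_add_smul, hc2, mul_zero, add_zero, htr] at hdet
    have h0 : ((x.trace : ℤ) : ZMod (p ^ a)) * c = 0 := by
      have := congrArg (fun t => t - 1) hdet
      simpa using this
    have : ((x.trace * (p : ℤ) ^ (a - 1) : ℤ) : ZMod (p ^ a)) = 0 := by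
      push_cast
      rw [← h0, hc]
      push_cast
      ring
    rw [ZMod.intCast_zmod_eq_zero_iff_dvd] at this
    have hdvd2 : ((p : ℤ) ^ (a - 1) * p) ∣ ((p : ℤ) ^ (a - 1) * x.trace) := by
      have h1 : ((p : ℤ) ^ a) = (p : ℤ) ^ (a - 1) * p := by
        rw [← pow_succ]
        congr 1
        omega
      rw [← h1]
      calc ((p : ℤ) ^ a) ∣ x.trace * (p : ℤ) ^ (a - 1) := by exact_mod_cast this
        _ = (p : ℤ) ^ (a - 1) * x.trace := by ring
    rw [mul_dvd_mul_iff_left (pow_ne_zero (a - 1) (by exact_mod_cast hp.ne_zero))] at hdvd2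
    rw [ZMod.intCast_zmod_eq_zero_iff_dvd]
    exact_mod_cast hdvd2
  · rintro ⟨x, -, hmateq⟩
    rw [MonoidHom.mem_ker]
    apply Subtype.ext
    show (g : Matrix (Fin n) (Fin n) (ZMod (p ^ a))).map f = 1
    have hfc : f c = 0 := by
      rw [hc, map_natCast, ZMod.natCast_eq_zero_iff]
    rw [hmateq]
    ext i j
    simp [Matrix.map_apply, Matrix.add_apply, Matrix.smul_apply, smul_eq_mul, map_add,
      map_mul, hfc, Matrix.one_apply, apply_ite f]
end

section
/- Let p be a prime, a ≥ 3, n ≥ 2, and G = SL(n, ℤ/p^aℤ). Let K be the kernel of ψ_{a,a-1} : G → SL(n, ℤ/p^{a-1}ℤ) and L the kernel of ψ_{a,a-2} : G → SL(n, ℤ/p^{a-2}ℤ). Then every element of K commutes with every element of L, and K has no proper supplement in L: if U is a subgroup of G contained in L such that every element of L can be written as k·u with k ∈ K and u ∈ U, then U = L. -/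
open Matrix

lemma cast_pow_self (p b : ℕ) : ((p : ZMod (p ^ b)) ^ b) = 0 := by
  have h : ((p ^ b : ℕ) : ZMod (p ^ b)) = 0 := ZMod.natCast_self _
  push_cast at h
  exact h

lemma exists_div {p a b : ℕ} [NeZero (p ^ a)] (hb : b ≤ a) (y : ZMod (p ^ a))
    (hy : ZMod.castHom (pow_dvd_pow p hb) (ZMod (p ^ b)) y = 0) :
    ∃ z : ZMod (p ^ a), y = (p : ZMod (p ^ a)) ^ b * z := by
  have h1 : ((y.val : ℕ) : ZMod (p ^ b)) = 0 := by
    rw [← map_natCast (ZMod.castHom (pow_dvd_pow p hb) (ZMod (p ^ b))) y.val,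
      ZMod.natCast_zmod_val]
    exact hy
  rw [ZMod.natCast_eq_zero_iff] at h1
  obtain ⟨z, hz⟩ := h1
  refine ⟨(z : ZMod (p ^ a)), ?_⟩
  have hyy : y = ((y.val : ℕ) : ZMod (p ^ a)) := (ZMod.natCast_zmod_val y).symm
  rw [hyy, hz]
  push_cast
  ring

lemma mem_ker_iff {n p a b : ℕ} [NeZero (p ^ a)] (hb : b ≤ a)
    (g : Matrix.SpecialLinearGroup (Fin n) (ZMod (p ^ a))) :
    g ∈ (SLpow n p a b hb).ker ↔
      ∃ B : Matrix (Fin n) (Fin n) (ZMod (p ^ a)),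
        (g : Matrix (Fin n) (Fin n) (ZMod (p ^ a))) = 1 + ((p : ZMod (p ^ a)) ^ b) • B := by
  set f := ZMod.castHom (pow_dvd_pow p hb) (ZMod (p ^ b)) with hf
  have hfp : f ((p : ZMod (p ^ a)) ^ b) = 0 := by
    rw [map_pow, map_natCast]
    exact cast_pow_self p b
  constructor
  · intro hg
    rw [MonoidHom.mem_ker] at hg
    have hg' : ((g : Matrix (Fin n) (Fin n) (ZMod (p ^ a))) - 1).map f = 0 := by
      have h1 : (g : Matrix (Fin n) (Fin n) (ZMod (p ^ a))).map f = 1 := by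
        have := congrArg (fun x : Matrix.SpecialLinearGroup (Fin n) (ZMod (p ^ b)) =>
          (x : Matrix (Fin n) (Fin n) (ZMod (p ^ b)))) hg
        simpa [SLpow, Matrix.SpecialLinearGroup.map_apply_coe] using this
      have : ((g : Matrix (Fin n) (Fin n) (ZMod (p ^ a))) - 1).map f =
          (g : Matrix (Fin n) (Fin n) (ZMod (p ^ a))).map f - (1 : Matrix (Fin n) (Fin n) (ZMod (p ^ a))).map f := by
        ext i j
        simp [Matrix.map_apply, Matrix.sub_apply, Matrix.one_apply, apply_ite f]
      rw [this, h1]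
      have h2 : (1 : Matrix (Fin n) (Fin n) (ZMod (p ^ a))).map f = 1 := by
        ext i j
        simp [Matrix.map_apply, Matrix.one_apply, apply_ite f]
      rw [h2, sub_self]
    have hdiv : ∀ i j, ∃ z, ((g : Matrix (Fin n) (Fin n) (ZMod (p ^ a))) - 1) i j
        = (p : ZMod (p ^ a)) ^ b * z := by
      intro i j
      apply exists_div hb
      have := congrFun (congrFun hg' i) j
      simpa only [Matrix.map_apply, Matrix.zero_apply] using this
    choose B hB using fun i => hdiv i
    refine ⟨Matrix.of (fun i j => B i j), ?_⟩
    ext i j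
    have := hB i j
    simp only [Matrix.sub_apply] at this
    simp [Matrix.add_apply, Matrix.smul_apply, smul_eq_mul]
    linear_combination this
  · rintro ⟨B, hB⟩
    rw [MonoidHom.mem_ker]
    apply Subtype.ext
    show ((SLpow n p a b hb) g : Matrix (Fin n) (Fin n) (ZMod (p ^ b))) = 1
    rw [show (SLpow n p a b hb) g = Matrix.SpecialLinearGroup.map f g from rfl,
      Matrix.SpecialLinearGroup.map_apply_coe, RingHom.mapMatrix_apply]
    rw [hB]
    have : ((1 : Matrix (Fin n) (Fin n) (ZMod (p ^ a))) + ((p : ZMod (p ^ a)) ^ b) • B).map f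
        = (1 : Matrix (Fin n) (Fin n) (ZMod (p ^ a))).map f + (((p : ZMod (p ^ a)) ^ b) • B).map f := by
      ext i j; simp [Matrix.map_apply, Matrix.add_apply, Matrix.one_apply, apply_ite f]
    rw [this]
    have h2 : (1 : Matrix (Fin n) (Fin n) (ZMod (p ^ a))).map f = 1 := by
      ext i j; simp [Matrix.map_apply, Matrix.one_apply, apply_ite f]
    have h3 : (((p : ZMod (p ^ a)) ^ b) • B).map f = 0 := by
      ext i j
      simp [Matrix.map_apply, Matrix.smul_apply, smul_eq_mul, hfp]
    rw [h2, h3, add_zero]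

lemma ppow_eq_zero {p a : ℕ} {b : ℕ} (hab : a ≤ b) : ((p : ZMod (p ^ a))) ^ b = 0 := by
  have h0 : (p : ZMod (p ^ a)) ^ a = 0 := cast_pow_self p a
  have hb : b = a + (b - a) := by omega
  rw [hb, pow_add, h0, zero_mul]

lemma ker_commute {n p a : ℕ} [NeZero (p ^ a)] (ha : 3 ≤ a)
    (k g : Matrix.SpecialLinearGroup (Fin n) (ZMod (p ^ a)))
    (hk : k ∈ (SLpow n p a (a - 1) (Nat.sub_le a 1)).ker)
    (hg : g ∈ (SLpow n p a (a - 2) (Nat.sub_le a 2)).ker) : k * g = g * k := by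
  obtain ⟨B, hB⟩ := (mem_ker_iff (Nat.sub_le a 1) k).mp hk
  obtain ⟨C, hC⟩ := (mem_ker_iff (Nat.sub_le a 2) g).mp hg
  have hrs : (p : ZMod (p ^ a)) ^ (a - 1) * (p : ZMod (p ^ a)) ^ (a - 2) = 0 := by
    rw [← pow_add]
    exact ppow_eq_zero (by omega)
  have h1 : ((p : ZMod (p ^ a)) ^ (a - 1) • B) * ((p : ZMod (p ^ a)) ^ (a - 2) • C) = 0 := by
    rw [smul_mul_smul_comm, hrs, zero_smul]
  have h2 : ((p : ZMod (p ^ a)) ^ (a - 2) • C) * ((p : ZMod (p ^ a)) ^ (a - 1) • B) = 0 := by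
    rw [smul_mul_smul_comm, mul_comm, hrs, zero_smul]
  apply Subtype.ext
  rw [Matrix.SpecialLinearGroup.coe_mul, Matrix.SpecialLinearGroup.coe_mul, hB, hC,
    add_mul, mul_add, mul_add, one_mul, mul_one, h1, add_mul, mul_add, mul_add, one_mul,
    mul_one, h2]
  simp only [one_mul, mul_one]
  abel

lemma pow_one_add {n : ℕ} {α : Type*} [CommRing α] (N : Matrix (Fin n) (Fin n) α)
    (hN : N * N = 0) (m : ℕ) : (1 + N) ^ m = 1 + m • N := by
  induction m with
  | zero => simp
  | succ m ih =>
    rw [pow_succ, ih, add_mul, mul_add, mul_add, one_mul, mul_one, smul_mul_assoc, hN,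
      smul_zero, add_zero, succ_nsmul]
    simp only [one_mul, mul_one]
    abel

lemma kpow_eq_one {n p a : ℕ} [NeZero (p ^ a)] (ha : 3 ≤ a)
    (k : Matrix.SpecialLinearGroup (Fin n) (ZMod (p ^ a)))
    (hk : k ∈ (SLpow n p a (a - 1) (Nat.sub_le a 1)).ker) : k ^ p = 1 := by
  obtain ⟨B, hB⟩ := (mem_ker_iff (Nat.sub_le a 1) k).mp hk
  have hsq : ((p : ZMod (p ^ a)) ^ (a - 1) • B) * ((p : ZMod (p ^ a)) ^ (a - 1) • B) = 0 := by
    rw [smul_mul_smul_comm, ← pow_add, ppow_eq_zero (by omega : a ≤ (a-1) + (a-1)), zero_smul]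
  apply Subtype.ext
  rw [Matrix.SpecialLinearGroup.coe_pow, hB, pow_one_add _ hsq, ← Nat.cast_smul_eq_nsmul
    (ZMod (p ^ a)), smul_smul, ← pow_succ']
  rw [show (a - 1) + 1 = a by omega, ppow_eq_zero (le_refl a), zero_smul, add_zero]
  rfl

lemma pow_expand {α : Type*} [CommRing α] (x : α) (hx3 : x ^ 3 = 0) (m : ℕ) :
    (1 + x) ^ m = 1 + (m : α) * x + (m.choose 2 : α) * x ^ 2 := by
  induction m with
  | zero => simp
  | succ m ih =>
    have hch : ((m + 1).choose 2 : α) = (m.choose 2 : α) + (m : α) := by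
      have h := Nat.choose_succ_succ m 1
      rw [h, Nat.choose_one_right]; push_cast; ring
    calc (1 + x) ^ (m + 1) = (1 + x) ^ m * (1 + x) := by rw [pow_succ]
      _ = (1 + (m : α) * x + (m.choose 2 : α) * x ^ 2) * (1 + x) := by rw [ih]
      _ = 1 + ((m + 1 : ℕ) : α) * x + (((m + 1).choose 2 : ℕ) : α) * x ^ 2 := by
          rw [hch]; push_cast; linear_combination (m.choose 2 : α) * hx3

lemma scalar_pow {α : Type*} [CommRing α] (p : ℕ) (q c : α) (hq3 : q ^ 3 = 0)
    (hc2 : (p.choose 2 : α) * q ^ 2 = 0) :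
    (1 + q * c) ^ p = 1 + (p : α) * q * c := by
  have h3 : (q * c) ^ 3 = 0 := by rw [mul_pow, hq3, zero_mul]
  rw [pow_expand (q * c) h3 p]
  have h2 : (p.choose 2 : α) * (q * c) ^ 2 = 0 := by
    rw [mul_pow, ← mul_assoc, hc2, zero_mul]
  linear_combination h2

lemma scalar_pow_inv {α : Type*} [CommRing α] (p : ℕ) (q c : α) (hq3 : q ^ 3 = 0)
    (hc2 : (p.choose 2 : α) * q ^ 2 = 0) (hr2 : ((p : α) * q) ^ 2 = 0) :
    (1 - q * c + q ^ 2 * c ^ 2) ^ p = 1 - (p : α) * q * c := by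
  have he : (1 + q * c) * (1 - q * c + q ^ 2 * c ^ 2) = 1 := by
    linear_combination c ^ 3 * hq3
  have h1 : (1 + (p : α) * q * c) * (1 - q * c + q ^ 2 * c ^ 2) ^ p = 1 := by
    rw [← scalar_pow p q c hq3 hc2, ← mul_pow, he, one_pow]
  have h2 : (1 + (p : α) * q * c) * (1 - (p : α) * q * c) = 1 := by
    linear_combination (-(c ^ 2)) * hr2
  calc (1 - q * c + q ^ 2 * c ^ 2) ^ p
      = ((1 + (p : α) * q * c) * (1 - (p : α) * q * c)) * (1 - q * c + q ^ 2 * c ^ 2) ^ p := by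
        rw [h2, one_mul]
    _ = (1 - (p : α) * q * c) * ((1 + (p : α) * q * c) * (1 - q * c + q ^ 2 * c ^ 2) ^ p) := by
        ring
    _ = 1 - (p : α) * q * c := by rw [h1, mul_one]

def Sset (n p a : ℕ) (U : Subgroup (Matrix.SpecialLinearGroup (Fin n) (ZMod (p ^ a))))
    (B : Matrix (Fin n) (Fin n) (ZMod (p ^ a))) : Prop :=
  ∃ u, u ∈ U ∧ (u : Matrix (Fin n) (Fin n) (ZMod (p ^ a)))
    = 1 + ((p : ZMod (p ^ a)) ^ (a - 1)) • B

lemma Sset_zero {n p a : ℕ} (U : Subgroup (Matrix.SpecialLinearGroup (Fin n) (ZMod (p ^ a)))) :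
    Sset n p a U 0 := ⟨1, U.one_mem, by simp⟩

lemma rr_zero {p a : ℕ} (ha : 2 ≤ a) :
    ((p : ZMod (p ^ a)) ^ (a - 1)) * ((p : ZMod (p ^ a)) ^ (a - 1)) = 0 := by
  rw [← pow_add]; exact ppow_eq_zero (by omega)

lemma Sset_add {n p a : ℕ} (ha : 2 ≤ a)
    (U : Subgroup (Matrix.SpecialLinearGroup (Fin n) (ZMod (p ^ a))))
    {B C : Matrix (Fin n) (Fin n) (ZMod (p ^ a))}
    (hB : Sset n p a U B) (hC : Sset n p a U C) : Sset n p a U (B + C) := by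
  obtain ⟨u, hu, hBu⟩ := hB
  obtain ⟨v, hv, hCv⟩ := hC
  refine ⟨u * v, U.mul_mem hu hv, ?_⟩
  rw [Matrix.SpecialLinearGroup.coe_mul, hBu, hCv, add_mul, mul_add, mul_add, one_mul,
    mul_one, smul_mul_smul_comm, rr_zero ha, zero_smul, smul_add]
  simp only [one_mul]
  abel

lemma Sset_cong {n p a : ℕ}
    (U : Subgroup (Matrix.SpecialLinearGroup (Fin n) (ZMod (p ^ a))))
    {B C : Matrix (Fin n) (Fin n) (ZMod (p ^ a))}
    (hBC : ((p : ZMod (p ^ a)) ^ (a - 1)) • B = ((p : ZMod (p ^ a)) ^ (a - 1)) • C)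
    (hB : Sset n p a U B) : Sset n p a U C := by
  obtain ⟨u, hu, hBu⟩ := hB
  exact ⟨u, hu, by rw [hBu, hBC]⟩

lemma Sset_gen1 {n p a : ℕ} [NeZero (p ^ a)] (ha : 3 ≤ a)
    (U : Subgroup (Matrix.SpecialLinearGroup (Fin n) (ZMod (p ^ a))))
    (hpowU : ∀ g ∈ (SLpow n p a (a - 2) (Nat.sub_le a 2)).ker, g ^ p ∈ U)
    (i j : Fin n) (hij : i ≠ j) (c : ZMod (p ^ a)) :
    Sset n p a U (Matrix.single i j c) := by
  set q : ZMod (p ^ a) := (p : ZMod (p ^ a)) ^ (a - 2) with hq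
  set x : Matrix.SpecialLinearGroup (Fin n) (ZMod (p ^ a)) :=
    ⟨Matrix.transvection i j (q * c), Matrix.det_transvection_of_ne i j hij (q * c)⟩ with hx
  have hxL : x ∈ (SLpow n p a (a - 2) (Nat.sub_le a 2)).ker := by
    rw [mem_ker_iff]
    refine ⟨Matrix.single i j c, ?_⟩
    show Matrix.transvection i j (q * c) = _
    rw [Matrix.transvection, Matrix.smul_single, smul_eq_mul]
  refine ⟨x ^ p, hpowU x hxL, ?_⟩
  have hN : Matrix.single i j (q * c) * Matrix.single i j (q * c) = 0 :=
    Matrix.single_mul_single_of_ne (c := (q * c)) i j _ (Ne.symm hij) (q * c)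
  rw [Matrix.SpecialLinearGroup.coe_pow]
  show (Matrix.transvection i j (q * c)) ^ p = _
  rw [Matrix.transvection, pow_one_add _ hN p, ← Nat.cast_smul_eq_nsmul (ZMod (p ^ a)),
    Matrix.smul_single, smul_eq_mul, ← mul_assoc, Matrix.smul_single,
    smul_eq_mul]
  have hpq : (p : ZMod (p ^ a)) * q = (p : ZMod (p ^ a)) ^ (a - 1) := by
    rw [hq, ← pow_succ']
    congr 1
    omega
  rw [hpq]

lemma pair_diag {n : ℕ} {α : Type*} [AddZeroClass α] (i j : Fin n) (hij : i ≠ j) (c c' : α) :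
    Matrix.single i i c + Matrix.single j j c'
      = Matrix.diagonal (fun t => if t = i then c else if t = j then c' else 0) := by
  ext s t
  rw [Matrix.diagonal_apply]
  simp only [Matrix.add_apply, Matrix.single, Matrix.of_apply]
  by_cases hst : s = t
  · subst hst
    by_cases hsi : s = i
    · subst hsi
      simp [Ne.symm hij]
    · by_cases hsj : s = j
      · subst hsj
        simp [hij, Ne.symm hij]
      · have h1 : ¬ i = s := fun h => hsi h.symm
        have h2 : ¬ j = s := fun h => hsj h.symm
        simp [h1, h2, hsi, hsj]
  · have h1 : ¬(i = s ∧ i = t) := fun h => hst (h.1.symm.trans h.2)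
    have h2 : ¬(j = s ∧ j = t) := fun h => hst (h.1.symm.trans h.2)
    simp [h1, h2, hst]

lemma Sset_gen2A {n p a : ℕ} [NeZero (p ^ a)] (hp : p.Prime) (ha : 3 ≤ a)
    (U : Subgroup (Matrix.SpecialLinearGroup (Fin n) (ZMod (p ^ a))))
    (hpowU : ∀ g ∈ (SLpow n p a (a - 2) (Nat.sub_le a 2)).ker, g ^ p ∈ U)
    (i j : Fin n) (hij : i ≠ j) (c : ZMod (p ^ a))
    (hcase : (p.choose 2 : ZMod (p ^ a)) * ((p : ZMod (p ^ a)) ^ (a - 2)) ^ 2 = 0) :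
    Sset n p a U (Matrix.single i i c + Matrix.single j j (-c)) := by
  set q : ZMod (p ^ a) := (p : ZMod (p ^ a)) ^ (a - 2) with hq
  set r : ZMod (p ^ a) := (p : ZMod (p ^ a)) ^ (a - 1) with hr
  have hq3 : q ^ 3 = 0 := by rw [hq, ← pow_mul]; exact ppow_eq_zero (by omega)
  have hpq : (p : ZMod (p ^ a)) * q = r := by
    rw [hq, hr, ← pow_succ']; congr 1; omega
  have hr2 : ((p : ZMod (p ^ a)) * q) ^ 2 = 0 := by
    rw [hpq, hr, ← pow_mul]; exact ppow_eq_zero (by omega)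
  set e : ZMod (p ^ a) := 1 - q * c + q ^ 2 * c ^ 2 with he
  set d : Fin n → ZMod (p ^ a) :=
    fun t => if t = i then 1 + q * c else if t = j then e else 1 with hd
  have hdi : d i = 1 + q * c := by rw [hd]; simp
  have hdj : d j = e := by rw [hd]; simp [Ne.symm hij]
  have hdo : ∀ t, t ≠ i → t ≠ j → d t = 1 := by
    intro t h1 h2; rw [hd]; simp [h1, h2]
  have hdet : (Matrix.diagonal d).det = 1 := by
    rw [Matrix.det_diagonal]
    have hsub : ∏ t, d t = ∏ t ∈ ({i, j} : Finset (Fin n)), d t := by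
      refine (Finset.prod_subset (Finset.subset_univ _) (fun t _ ht => ?_)).symm
      simp only [Finset.mem_insert, Finset.mem_singleton, not_or] at ht
      exact hdo t ht.1 ht.2
    rw [hsub, Finset.prod_pair hij, hdi, hdj, he]
    linear_combination c ^ 3 * hq3
  set x : Matrix.SpecialLinearGroup (Fin n) (ZMod (p ^ a)) :=
    ⟨Matrix.diagonal d, hdet⟩ with hx
  have hxL : x ∈ (SLpow n p a (a - 2) (Nat.sub_le a 2)).ker := by
    rw [mem_ker_iff]
    refine ⟨Matrix.diagonal (fun t => if t = i then c else if t = j then -c + q * c ^ 2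
      else 0), ?_⟩
    show Matrix.diagonal d = _
    rw [← Matrix.diagonal_smul, ← Matrix.diagonal_one, Matrix.diagonal_add]
    apply congrArg Matrix.diagonal
    funext t
    simp only [Pi.add_apply, Pi.smul_apply, smul_eq_mul]
    by_cases h1 : t = i
    · subst h1; rw [hdi]; rw [if_pos rfl]
    · by_cases h2 : t = j
      · subst h2; rw [hdj, if_neg h1, if_pos rfl, he]; ring
      · rw [hdo t h1 h2, if_neg h1, if_neg h2, mul_zero, add_zero]
  refine ⟨x ^ p, hpowU x hxL, ?_⟩
  rw [Matrix.SpecialLinearGroup.coe_pow]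
  show (Matrix.diagonal d) ^ p = _
  rw [Matrix.diagonal_pow, pair_diag i j hij c (-c), ← Matrix.diagonal_smul,
    ← Matrix.diagonal_one, Matrix.diagonal_add]
  apply congrArg Matrix.diagonal
  funext t
  simp only [Pi.pow_apply, Pi.add_apply, Pi.smul_apply, smul_eq_mul]
  by_cases h1 : t = i
  · subst h1
    rw [hdi, if_pos rfl, scalar_pow p q c hq3 hcase, hpq]
  · by_cases h2 : t = j
    · subst h2
      rw [hdj, if_neg h1, if_pos rfl, he, scalar_pow_inv p q c hq3 hcase hr2, hpq]
      ring
    · rw [hdo t h1 h2, if_neg h1, if_neg h2, one_pow, mul_zero, add_zero]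


set_option maxHeartbeats 1000000 in

lemma Sset_gen2B {n : ℕ}
    (U : Subgroup (Matrix.SpecialLinearGroup (Fin n) (ZMod (2 ^ 3))))
    (hpowU : ∀ g ∈ (SLpow n 2 3 (3 - 2) (Nat.sub_le 3 2)).ker, g ^ 2 ∈ U)
    (i j : Fin n) (hij : i ≠ j) (c : ZMod (2 ^ 3)) :
    Sset n 2 3 U (Matrix.single i i c + Matrix.single j j (-c)) := by
  haveI : NeZero (2 ^ 3 : ℕ) := ⟨by norm_num⟩
  set q : ZMod (2 ^ 3) := ((2 : ℕ) : ZMod (2 ^ 3)) ^ (3 - 2) with hq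
  set r : ZMod (2 ^ 3) := ((2 : ℕ) : ZMod (2 ^ 3)) ^ (3 - 1) with hr
  have hq2 : q = 2 := by rw [hq]; decide
  have hr4 : r = 4 := by rw [hr]; decide
  have hqq : q * q = r := by rw [hq2, hr4]; decide
  have hqq2 : q + q = r := by rw [hq2, hr4]; decide
  have hrr0 : r + r = 0 := by rw [hr4]; decide
  have hrq0 : r * q = 0 := by rw [hq2, hr4]; decide
  have hqr0 : q * r = 0 := by rw [hq2, hr4]; decide
  have hrr0' : r * r = 0 := by rw [hr4]; decide
  have hnegr : -r = r := by rw [hr4]; decide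
  set t1 : Matrix.SpecialLinearGroup (Fin n) (ZMod (2 ^ 3)) :=
    ⟨Matrix.transvection i j q, Matrix.det_transvection_of_ne i j hij q⟩ with ht1
  set t2 : Matrix.SpecialLinearGroup (Fin n) (ZMod (2 ^ 3)) :=
    ⟨Matrix.transvection j i q, Matrix.det_transvection_of_ne j i (Ne.symm hij) q⟩ with ht2
  set x := t1 * t2 with hxdef
  have hxmat : (x : Matrix (Fin n) (Fin n) (ZMod (2 ^ 3)))
      = 1 + (Matrix.single i j q + Matrix.single j i q
          + Matrix.single i i r) := by
    rw [hxdef, Matrix.SpecialLinearGroup.coe_mul]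
    show Matrix.transvection i j q * Matrix.transvection j i q = _
    rw [Matrix.transvection, Matrix.transvection, add_mul, mul_add, mul_add, one_mul,
      mul_one, Matrix.single_mul_single_same, hqq]
    simp only [one_mul]
    abel
  have hxL : x ∈ (SLpow n 2 3 (3 - 2) (Nat.sub_le 3 2)).ker := by
    rw [mem_ker_iff]
    refine ⟨Matrix.single i j 1 + Matrix.single j i 1
      + Matrix.single i i q, ?_⟩
    have hsm : q • (Matrix.single i j (1 : ZMod (2 ^ 3)) + Matrix.single j i 1
        + Matrix.single i i q)
        = Matrix.single i j q + Matrix.single j i q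
          + Matrix.single i i r := by
      rw [smul_add, smul_add, Matrix.smul_single, Matrix.smul_single,
        Matrix.smul_single]
      simp only [smul_eq_mul, mul_one]
      rw [hqq]
    rw [← hq, hxmat, hsm]
  set B1 := Matrix.single i j (1 : ZMod (2 ^ 3)) + Matrix.single j i 1
      + Matrix.single i i 1 + Matrix.single j j 1 with hB1
  have hx2 : ((x ^ 2 : Matrix.SpecialLinearGroup (Fin n) (ZMod (2 ^ 3))) :
      Matrix (Fin n) (Fin n) (ZMod (2 ^ 3))) = 1 + r • B1 := by
    rw [Matrix.SpecialLinearGroup.coe_pow, hxmat, pow_two]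
    have p11 : Matrix.single i j q * Matrix.single i j q = 0 :=
      Matrix.single_mul_single_of_ne (c := q) i j _ (Ne.symm hij) q
    have p12 : Matrix.single i j q * Matrix.single j i q
        = Matrix.single i i r := by rw [Matrix.single_mul_single_same, hqq]
    have p13 : Matrix.single i j q * Matrix.single i i r = 0 :=
      Matrix.single_mul_single_of_ne (c := q) i j _ (Ne.symm hij) r
    have p21 : Matrix.single j i q * Matrix.single i j q
        = Matrix.single j j r := by rw [Matrix.single_mul_single_same, hqq]
    have p22 : Matrix.single j i q * Matrix.single j i q = 0 :=
      Matrix.single_mul_single_of_ne (c := q) j i _ hij q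
    have p23 : Matrix.single j i q * Matrix.single i i r = 0 := by
      rw [Matrix.single_mul_single_same, hqr0, Matrix.single_zero]
    have p31 : Matrix.single i i r * Matrix.single i j q = 0 := by
      rw [Matrix.single_mul_single_same, hrq0, Matrix.single_zero]
    have p32 : Matrix.single i i r * Matrix.single j i q = 0 :=
      Matrix.single_mul_single_of_ne (c := r) i i _ hij q
    have p33 : Matrix.single i i r * Matrix.single i i r = 0 := by
      rw [Matrix.single_mul_single_same, hrr0', Matrix.single_zero]
    set w := Matrix.single i j q + Matrix.single j i q
      + Matrix.single i i r with hw
    have hprod : w * w = Matrix.single i i r + Matrix.single j j r := by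
      rw [hw]
      simp only [mul_add, add_mul, p11, p12, p13, p21, p22, p23, p31, p32, p33,
        add_zero, zero_add]
      try rw [add_comm]
    have expand : (1 + w) * (1 + w) = 1 + w + w + w * w := by noncomm_ring
    rw [expand, hprod, hw, hB1]
    ext s t
    simp only [Matrix.add_apply, Matrix.smul_apply, Matrix.one_apply,
      Matrix.single, Matrix.of_apply, smul_eq_mul]
    split_ifs <;> simp_all [hq2, hr4] <;> decide
  have hSB1 : Sset n 2 3 U B1 := ⟨x ^ 2, hpowU x hxL, by rw [hx2, hr]⟩
  have hSB3 : Sset n 2 3 U (B1 + Matrix.single i j 1 + Matrix.single j i 1) :=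
    Sset_add (by norm_num) U (Sset_add (by norm_num) U hSB1
      (Sset_gen1 (by norm_num) U hpowU i j hij 1))
      (Sset_gen1 (by norm_num) U hpowU j i (Ne.symm hij) 1)
  have hrc : r * c = 0 ∨ r * c = r := by
    rw [hr4]
    revert c
    decide
  rcases hrc with hc0 | hc1
  · refine Sset_cong U ?_ (Sset_zero U)
    rw [← hr, smul_zero, smul_add, Matrix.smul_single, Matrix.smul_single]
    simp only [smul_eq_mul, mul_neg, hc0, neg_zero, Matrix.single_zero, add_zero]
  · have hrc' : r * (-c) = r := by rw [mul_neg, hc1, hnegr]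
    refine Sset_cong U ?_ hSB3
    rw [← hr]
    have hexp : r • (B1 + Matrix.single i j 1 + Matrix.single j i 1)
        = Matrix.single i j r + Matrix.single j i r
          + Matrix.single i i r + Matrix.single j j r
          + Matrix.single i j r + Matrix.single j i r := by
      rw [hB1, smul_add, smul_add, smul_add, smul_add, smul_add]
      simp only [Matrix.smul_single, smul_eq_mul, mul_one]
    have hexp2 : r • (Matrix.single i i c + Matrix.single j j (-c))
        = Matrix.single i i r + Matrix.single j j r := by
      rw [smul_add]
      simp only [Matrix.smul_single, smul_eq_mul, hc1, hrc']
    rw [hexp, hexp2]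
    have hs1 : Matrix.single i j r + Matrix.single i j r
        = (0 : Matrix (Fin n) (Fin n) (ZMod (2 ^ 3))) := by
      rw [← Matrix.single_add, hrr0, Matrix.single_zero]
    have hs2 : Matrix.single j i r + Matrix.single j i r
        = (0 : Matrix (Fin n) (Fin n) (ZMod (2 ^ 3))) := by
      rw [← Matrix.single_add, hrr0, Matrix.single_zero]
    calc Matrix.single i j r + Matrix.single j i r
          + Matrix.single i i r + Matrix.single j j r
          + Matrix.single i j r + Matrix.single j i r
        = (Matrix.single i j r + Matrix.single i j r)
          + ((Matrix.single j i r + Matrix.single j i r)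
          + (Matrix.single i i r + Matrix.single j j r)) := by abel
      _ = Matrix.single i i r + Matrix.single j j r := by
          rw [hs1, hs2, zero_add, zero_add]

lemma Sset_gen2 {n p a : ℕ} [NeZero (p ^ a)] (hp : p.Prime) (ha : 3 ≤ a)
    (U : Subgroup (Matrix.SpecialLinearGroup (Fin n) (ZMod (p ^ a))))
    (hpowU : ∀ g ∈ (SLpow n p a (a - 2) (Nat.sub_le a 2)).ker, g ^ p ∈ U)
    (i j : Fin n) (hij : i ≠ j) (c : ZMod (p ^ a)) :
    Sset n p a U (Matrix.single i i c + Matrix.single j j (-c)) := by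
  by_cases hcase : (p.choose 2 : ZMod (p ^ a)) * ((p : ZMod (p ^ a)) ^ (a - 2)) ^ 2 = 0
  · exact Sset_gen2A hp ha U hpowU i j hij c hcase
  · have hp2 : p = 2 := by
      by_contra hne
      have h3 : 3 ≤ p := by have := hp.two_le; omega
      apply hcase
      obtain ⟨m, hm⟩ := Nat.Prime.dvd_choose_self (k := 2) hp (by norm_num) (by omega)
      rw [hm]
      push_cast
      have hpp : (p : ZMod (p ^ a)) * ((p : ZMod (p ^ a)) ^ (a - 2)) ^ 2 = 0 := by
        rw [← pow_mul, ← pow_succ']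
        exact ppow_eq_zero (by omega)
      linear_combination (m : ZMod (p ^ a)) * hpp
    have ha3 : a = 3 := by
      by_contra hne
      apply hcase
      have h0 : ((p : ZMod (p ^ a)) ^ (a - 2)) ^ 2 = 0 := by
        rw [← pow_mul]
        exact ppow_eq_zero (by omega)
      rw [h0, mul_zero]
    subst hp2
    subst ha3
    exact Sset_gen2B U hpowU i j hij c

/-- For `a ≥ 3`, the kernel `K` of `ψ_{a,a-1}` centralizes the kernel `L` of `ψ_{a,a-2}`
and has no proper supplement in `L`. -/
theorem stmt4 (p : ℕ) (hp : p.Prime) (a : ℕ) (ha : 3 ≤ a) (n : ℕ) (hn : 2 ≤ n) :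
    (∀ k ∈ (SLpow n p a (a - 1) (Nat.sub_le a 1)).ker,
      ∀ g ∈ (SLpow n p a (a - 2) (Nat.sub_le a 2)).ker, k * g = g * k) ∧
    (∀ U : Subgroup (Matrix.SpecialLinearGroup (Fin n) (ZMod (p ^ a))),
      U ≤ (SLpow n p a (a - 2) (Nat.sub_le a 2)).ker →
      (∀ g ∈ (SLpow n p a (a - 2) (Nat.sub_le a 2)).ker,
        ∃ k ∈ (SLpow n p a (a - 1) (Nat.sub_le a 1)).ker, ∃ u ∈ U, g = k * u) →
      U = (SLpow n p a (a - 2) (Nat.sub_le a 2)).ker) := by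
  haveI : NeZero (p ^ a) := ⟨pow_ne_zero a hp.pos.ne'⟩
  refine ⟨fun k hk g hg => ker_commute ha k g hk hg, ?_⟩
  intro U hUL hsup
  have hpowU : ∀ g ∈ (SLpow n p a (a - 2) (Nat.sub_le a 2)).ker, g ^ p ∈ U := by
    intro g hg
    obtain ⟨k, hk, u, hu, hgu⟩ := hsup g hg
    have hcu : Commute k u := ker_commute ha k u hk (hUL hu)
    rw [hgu, Commute.mul_pow hcu, kpow_eq_one ha k hk, one_mul]
    exact U.pow_mem hu p
  have hK : ∀ k ∈ (SLpow n p a (a - 1) (Nat.sub_le a 1)).ker, k ∈ U := by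
    intro k hk
    obtain ⟨B, hB⟩ := (mem_ker_iff (Nat.sub_le a 1) k).mp hk
    have h0n : 0 < n := by omega
    set i0 : Fin n := ⟨0, h0n⟩ with hi0
    set T : Matrix (Fin n) (Fin n) (ZMod (p ^ a)) :=
      B + Matrix.single i0 i0 (-(Matrix.trace B)) with hT
    have hS : Sset n p a U T := by
      have hf : ∀ s t : Fin n, (if s = t then Matrix.single s s (B s s)
            + Matrix.single i0 i0 (-(B s s)) else Matrix.single s t (B s t))
          = Matrix.single s t (B s t)
            + (if s = t then Matrix.single i0 i0 (-(B s s)) else 0) := by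
        intro s t
        by_cases hst : s = t
        · subst hst; simp
        · simp [hst]
      have hsum1 : ∑ s : Fin n, ∑ t : Fin n, Matrix.single s t (B s t) = B :=
        (Matrix.matrix_eq_sum_single B).symm
      have hsum2 : ∑ s : Fin n, ∑ t : Fin n,
          (if s = t then Matrix.single i0 i0 (-(B s s)) else 0)
          = Matrix.single i0 i0 (-(Matrix.trace B)) := by
        have h1 : ∀ s : Fin n, (∑ t : Fin n,
            (if s = t then Matrix.single i0 i0 (-(B s s)) else 0))
            = Matrix.single i0 i0 (-(B s s)) := by
          intro s
          rw [Finset.sum_ite_eq]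
          simp
        rw [Finset.sum_congr rfl (fun s _ => h1 s)]
        have h2 : ∀ y : ZMod (p ^ a), Matrix.single i0 i0 y
            = y • Matrix.single i0 i0 (1 : ZMod (p ^ a)) := by
          intro y; rw [Matrix.smul_single, smul_eq_mul, mul_one]
        calc ∑ s : Fin n, Matrix.single i0 i0 (-(B s s))
            = ∑ s : Fin n, (-(B s s)) • Matrix.single i0 i0 (1 : ZMod (p ^ a)) :=
              Finset.sum_congr rfl (fun s _ => h2 _)
          _ = (∑ s : Fin n, -(B s s)) • Matrix.single i0 i0 (1 : ZMod (p ^ a)) := by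
              rw [Finset.sum_smul]
          _ = (-(Matrix.trace B)) • Matrix.single i0 i0 (1 : ZMod (p ^ a)) := by
              congr 1
              simp [Matrix.trace, Matrix.diag]
          _ = Matrix.single i0 i0 (-(Matrix.trace B)) := (h2 _).symm
      have hTsum : T = ∑ s : Fin n, ∑ t : Fin n,
          (if s = t then Matrix.single s s (B s s)
            + Matrix.single i0 i0 (-(B s s)) else Matrix.single s t (B s t)) := by
        rw [hT]
        calc B + Matrix.single i0 i0 (-(Matrix.trace B))
            = (∑ s : Fin n, ∑ t : Fin n, Matrix.single s t (B s t))
              + ∑ s : Fin n, ∑ t : Fin n,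
                (if s = t then Matrix.single i0 i0 (-(B s s)) else 0) := by
              rw [hsum1, hsum2]
          _ = ∑ s : Fin n, ∑ t : Fin n, (Matrix.single s t (B s t)
              + (if s = t then Matrix.single i0 i0 (-(B s s)) else 0)) := by
              rw [← Finset.sum_add_distrib]
              exact Finset.sum_congr rfl (fun s _ => by rw [← Finset.sum_add_distrib])
          _ = ∑ s : Fin n, ∑ t : Fin n,
              (if s = t then Matrix.single s s (B s s)
                + Matrix.single i0 i0 (-(B s s))
              else Matrix.single s t (B s t)) :=
              Finset.sum_congr rfl (fun s _ => Finset.sum_congr rfl (fun t _ => (hf s t).symm))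
      rw [hTsum]
      apply Finset.sum_induction _ _ (fun _ _ => Sset_add (by omega) U) (Sset_zero U)
      intro s _
      apply Finset.sum_induction _ _ (fun _ _ => Sset_add (by omega) U) (Sset_zero U)
      intro t _
      by_cases hst : s = t
      · rw [if_pos hst]
        by_cases hsi : s = i0
        · have h0 : Matrix.single s s (B s s)
              + Matrix.single i0 i0 (-(B s s)) = 0 := by
            rw [hsi, ← Matrix.single_add, add_neg_cancel, Matrix.single_zero]
          rw [h0]
          exact Sset_zero U
        · exact Sset_gen2 hp ha U hpowU s i0 hsi (B s s)
      · rw [if_neg hst]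
        exact Sset_gen1 ha U hpowU s t hst (B s t)
    obtain ⟨u, hu, huT⟩ := hS
    set r := (p : ZMod (p ^ a)) ^ (a - 1) with hr
    have hrr : r * r = 0 := rr_zero (by omega)
    set z := r * Matrix.trace B with hz
    have hEy : ∀ y : ZMod (p ^ a), Matrix.single i0 i0 y
        = y • Matrix.single i0 i0 (1 : ZMod (p ^ a)) := by
      intro y; rw [Matrix.smul_single, smul_eq_mul, mul_one]
    have hk1 : (k : Matrix (Fin n) (Fin n) (ZMod (p ^ a)))
        = (1 + Matrix.single i0 i0 z)
          * (u : Matrix (Fin n) (Fin n) (ZMod (p ^ a))) := by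
      have hzero : Matrix.single i0 i0 z * (r • T) = 0 := by
        rw [hEy z, smul_mul_assoc, mul_smul_comm, smul_smul, hz]
        have hz3 : r * Matrix.trace B * r = 0 := by
          rw [mul_comm, ← mul_assoc, hrr, zero_mul]
        rw [hz3, zero_smul]
      rw [huT, hB]
      rw [add_mul, one_mul, mul_add, mul_one, hzero, add_zero]
      rw [hT, smul_add, Matrix.smul_single, smul_eq_mul, mul_neg, ← hz]
      have hcan : Matrix.single i0 i0 (-z) + Matrix.single i0 i0 z
          = (0 : Matrix (Fin n) (Fin n) (ZMod (p ^ a))) := by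
        rw [← Matrix.single_add, neg_add_cancel, Matrix.single_zero]
      have hre : (1 : Matrix (Fin n) (Fin n) (ZMod (p ^ a)))
          + (r • B + Matrix.single i0 i0 (-z)) + Matrix.single i0 i0 z
          = 1 + r • B + (Matrix.single i0 i0 (-z) + Matrix.single i0 i0 z) := by
        abel
      rw [hre, hcan, add_zero]
    have hz0 : z = 0 := by
      have hdetk : Matrix.det (k : Matrix (Fin n) (Fin n) (ZMod (p ^ a))) = 1 := k.prop
      have hdetu : Matrix.det (u : Matrix (Fin n) (Fin n) (ZMod (p ^ a))) = 1 := u.prop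
      have hdiag : (1 : Matrix (Fin n) (Fin n) (ZMod (p ^ a)))
          + Matrix.single i0 i0 z
          = Matrix.diagonal (fun t => if t = i0 then 1 + z else 1) := by
        ext s t
        rw [Matrix.diagonal_apply]
        simp only [Matrix.add_apply, Matrix.one_apply, Matrix.single, Matrix.of_apply]
        by_cases hst : s = t
        · subst hst
          by_cases hsi : s = i0
          · subst hsi; simp
          · have h1 : ¬ i0 = s := fun h => hsi h.symm
            simp [hsi, h1]
        · have h1 : ¬(i0 = s ∧ i0 = t) := fun h => hst (h.1.symm.trans h.2)
          simp [hst, h1]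
      rw [hk1, Matrix.det_mul, hdetu, mul_one, hdiag, Matrix.det_diagonal] at hdetk
      have hprod : (∏ t : Fin n, (if t = i0 then 1 + z else 1)) = 1 + z :=
        Fintype.prod_ite_eq' i0 (fun _ => 1 + z)
      rw [hprod] at hdetk
      exact (add_right_inj 1).mp (by rw [hdetk, add_zero])
    have hkm : (k : Matrix (Fin n) (Fin n) (ZMod (p ^ a)))
        = (u : Matrix (Fin n) (Fin n) (ZMod (p ^ a))) := by
      rw [hk1, hz0, Matrix.single_zero, add_zero, one_mul]
    have hkk : k = u := Subtype.ext hkm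
    rw [hkk]
    exact hu
  refine le_antisymm hUL ?_
  intro g hg
  obtain ⟨k, hk, u, hu, hgu⟩ := hsup g hg
  rw [hgu]
  exact U.mul_mem (hK k hk) hu
end

section
/- Let p be a prime, a ≥ 3, l ≥ 2, and let G = Sp(2l, ℤ/p^aℤ). Let K be the set of g ∈ G whose entrywise image in ℤ/p^{a-1}ℤ (under ZMod.castHom) is the identity matrix, and L the set of g ∈ G whose entrywise image in ℤ/p^{a-2}ℤ is the identity matrix. Then every element of K commutes with every element of L, and if U is a subgroup of G contained in L such that every element of L can be written as k·u with k ∈ K and u ∈ U, then U ⊇ L. -/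
open Matrix

section aux
variable {R : Type*} [CommRing R]

lemma aux_one_add_pow {A : Type*} [Ring A] (N : A) (h : N * N = 0) : ∀ m : ℕ,
    (1 + N) ^ m = 1 + (m : A) * N
  | 0 => by simp
  | (m + 1) => by
    rw [pow_succ, aux_one_add_pow N h m, mul_add, mul_one, add_mul, one_mul, mul_assoc, h,
      mul_zero, add_zero]
    push_cast
    rw [add_mul, one_mul]
    abel

lemma aux_cross {n : Type*} [Fintype n] [DecidableEq n] (c d : R) (hcd : c * d = 0)
    (X Y : Matrix n n R) : (1 + c • X) * (1 + d • Y) = 1 + c • X + d • Y := by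
  have h : (c • X) * (d • Y) = (c * d) • (X * Y) := by
    rw [smul_mul_assoc, mul_smul_comm, smul_smul]
  rw [mul_add, mul_one, add_mul, one_mul, h, hcd, zero_smul, add_zero, add_assoc]

lemma zmod_ker_iff {p a b : ℕ} (hp : 0 < p) (hba : b ≤ a) (x : ZMod (p ^ a)) :
    ZMod.castHom (pow_dvd_pow p hba) (ZMod (p ^ b)) x = 0 ↔
      ∃ y, x = (p : ZMod (p ^ a)) ^ b * y := by
  haveI : NeZero (p ^ a) := ⟨pow_ne_zero a hp.ne'⟩
  constructor
  · intro h
    have hx : ((x.val : ℕ) : ZMod (p ^ a)) = x := ZMod.natCast_rightInverse x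
    rw [← hx, map_natCast, ZMod.natCast_eq_zero_iff] at h
    obtain ⟨t, ht⟩ := h
    refine ⟨(t : ZMod (p ^ a)), ?_⟩
    rw [← hx, ht]
    push_cast
    ring
  · rintro ⟨y, rfl⟩
    rw [_root_.map_mul, map_pow, map_natCast, ← Nat.cast_pow, ZMod.natCast_self, zero_mul]

lemma mat_ker_iff {p a b : ℕ} (hp : 0 < p) (hba : b ≤ a) {n : Type*} [Fintype n] [DecidableEq n]
    (M : Matrix n n (ZMod (p ^ a))) :
    M.map (ZMod.castHom (pow_dvd_pow p hba) (ZMod (p ^ b))) = 1 ↔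
      ∃ X : Matrix n n (ZMod (p ^ a)), M = 1 + (p : ZMod (p ^ a)) ^ b • X := by
  constructor
  · intro h
    have h' : ∀ i j, ZMod.castHom (pow_dvd_pow p hba) (ZMod (p ^ b)) ((M - 1) i j) = 0 := by
      intro i j
      have h2 := congrFun (congrFun h i) j
      simp only [Matrix.map_apply] at h2
      rw [Matrix.sub_apply, map_sub, h2]
      rcases eq_or_ne i j with rfl | hij
      · rw [Matrix.one_apply_eq, Matrix.one_apply_eq, _root_.map_one, sub_self]
      · rw [Matrix.one_apply_ne hij, Matrix.one_apply_ne hij, map_zero, sub_zero]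
    choose Y hY using fun i j => (zmod_ker_iff hp hba _).mp (h' i j)
    refine ⟨Matrix.of Y, ?_⟩
    ext i j
    have := hY i j
    rw [Matrix.sub_apply] at this
    rw [Matrix.add_apply, Matrix.smul_apply, Matrix.of_apply, smul_eq_mul, ← this]
    ring
  · rintro ⟨X, rfl⟩
    ext i j
    rw [Matrix.map_apply, Matrix.add_apply, Matrix.smul_apply, map_add, smul_eq_mul,
      _root_.map_mul, map_pow, map_natCast, ← Nat.cast_pow, ZMod.natCast_self, zero_mul, add_zero]
    rcases eq_or_ne i j with rfl | hij
    · rw [Matrix.one_apply_eq, Matrix.one_apply_eq, _root_.map_one]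
    · rw [Matrix.one_apply_ne hij, Matrix.one_apply_ne hij, map_zero]
end aux

open Matrix

section mat
variable {R : Type*} [CommRing R] {l : Type*} [DecidableEq l] [Fintype l]

lemma vecMulVec_mul' {n m k : Type*} [Fintype m] (v : n → R) (w : m → R) (M : Matrix m k R) :
    vecMulVec v w * M = vecMulVec v (Matrix.vecMul w M) := by
  ext i j
  simp [Matrix.mul_apply, vecMulVec_apply, Matrix.vecMul, dotProduct, Finset.mul_sum,
    mul_assoc]

lemma vecMul_vecMulVec {n : Type*} [Fintype n] (w : n → R) (v v' : n → R) :
    Matrix.vecMul w (vecMulVec v v') = (w ⬝ᵥ v) • v' := by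
  ext j
  simp [Matrix.vecMul, vecMulVec_apply, dotProduct, Finset.sum_mul, mul_assoc]

lemma vecMulVec_transpose' {n m : Type*} (v : n → R) (w : m → R) :
    (vecMulVec v w)ᵀ = vecMulVec w v := by
  ext i j
  simp [vecMulVec_apply, mul_comm]

lemma dot_J (v : (l ⊕ l) → R) : v ⬝ᵥ (J l R) *ᵥ v = 0 := by
  have hv : v = Sum.elim (v ∘ Sum.inl) (v ∘ Sum.inr) := (Sum.elim_comp_inl_inr v).symm
  rw [hv, J, fromBlocks_mulVec]
  rw [Matrix.zero_mulVec, Matrix.neg_mulVec, Matrix.one_mulVec, Matrix.one_mulVec,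
    Matrix.zero_mulVec, zero_add, add_zero, sumElim_dotProduct_sumElim, dotProduct_neg,
    Sum.elim_comp_inl, Sum.elim_comp_inr, dotProduct_comm, neg_add_cancel]

lemma AJA (v : (l ⊕ l) → R) :
    vecMulVec v v * J l R * vecMulVec v v = 0 := by
  rw [vecMulVec_mul', vecMulVec_mul', _root_.vecMul_vecMulVec, ← Matrix.dotProduct_mulVec, dot_J,
    zero_smul]
  ext i j
  simp [vecMulVec_apply]

lemma AJAJ (v : (l ⊕ l) → R) :
    (vecMulVec v v * J l R) * (vecMulVec v v * J l R) = 0 := by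
  rw [← Matrix.mul_assoc, Matrix.mul_assoc (vecMulVec v v) (J l R) (vecMulVec v v), ←
    Matrix.mul_assoc, AJA, Matrix.zero_mul]

lemma Tmat_mem (v : (l ⊕ l) → R) (s : R) :
    1 + s • (vecMulVec v v * J l R) ∈ Matrix.symplecticGroup l R := by
  set A := vecMulVec v v with hAdef
  rw [SymplecticGroup.mem_iff]
  have hA : (A * J l R)ᵀ = -(J l R * A) := by
    rw [Matrix.transpose_mul, J_transpose, vecMulVec_transpose', Matrix.neg_mul, hAdef]
  have hA0 : A * (J l R * A) = 0 := by
    rw [← Matrix.mul_assoc, AJA]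
  have e1 : (1 + s • (A * J l R)) * J l R = J l R - s • A := by
    rw [Matrix.add_mul, Matrix.one_mul, smul_mul_assoc, Matrix.mul_assoc, J_squared,
      Matrix.mul_neg, Matrix.mul_one, smul_neg, ← sub_eq_add_neg]
  have e3 : (J l R - s • A) * (J l R * A) = -A := by
    rw [Matrix.sub_mul, ← Matrix.mul_assoc, J_squared, Matrix.neg_mul, Matrix.one_mul,
      smul_mul_assoc, hA0, smul_zero, sub_zero]
  have e2 : (J l R - s • A) * (1 - s • (J l R * A)) = J l R := by
    rw [Matrix.mul_sub, Matrix.mul_one, mul_smul_comm, e3, smul_neg, sub_neg_eq_add,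
      sub_add_cancel]
  rw [Matrix.transpose_add, Matrix.transpose_one, Matrix.transpose_smul, hA, smul_neg,
    ← sub_eq_add_neg, e1, e2]
end mat

open Matrix

lemma decomp {R : Type*} [CommRing R] {n : Type*} [Fintype n] [DecidableEq n]
    (c : R) (X' : Matrix n n R) (hsym : ∀ i j, c * X' i j = c * X' j i) :
    ∃ Lw : List ((n → R) × R),
      c • ((Lw.map fun w => w.2 • vecMulVec w.1 w.1)).sum = c • X' := by
  letI : LinearOrder n := LinearOrder.lift' (Fintype.equivFin n) (Equiv.injective _)
  set P : Finset (n × n) := Finset.univ.filter (fun ij : n × n => ij.1 < ij.2) with hP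
  refine ⟨(Finset.univ.toList.map fun i => ((Pi.single i (1 : R) : n → R), X' i i))
      ++ (P.toList.map fun ij =>
            ((Pi.single ij.1 (1 : R) + Pi.single ij.2 (1 : R) : n → R), X' ij.1 ij.2))
      ++ (P.toList.map fun ij => ((Pi.single ij.1 (1 : R) : n → R), -X' ij.1 ij.2))
      ++ (P.toList.map fun ij => ((Pi.single ij.2 (1 : R) : n → R), -X' ij.1 ij.2)), ?_⟩
  rw [List.map_append, List.map_append, List.map_append, List.sum_append, List.sum_append,
    List.sum_append, List.map_map, List.map_map, List.map_map, List.map_map,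
    Finset.sum_map_toList, Finset.sum_map_toList, Finset.sum_map_toList, Finset.sum_map_toList]
  ext k l
  simp only [Matrix.smul_apply, Matrix.add_apply, Matrix.sum_apply, Function.comp,
    vecMulVec_apply, Pi.add_apply, Pi.single_apply, smul_eq_mul]
  rcases eq_or_ne k l with rfl | hkl
  · have hT1 : (∑ i : n, X' i i * ((if k = i then (1:R) else 0) * (if k = i then (1:R) else 0)))
        = X' k k := by
      rw [Finset.sum_congr rfl (g := fun i => if k = i then X' i i else 0)
        (fun i _ => by by_cases h : k = i <;> simp [h]), Finset.sum_ite_eq]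
      simp
    have hT234 : (∑ ij ∈ P, X' ij.1 ij.2 *
          (((if k = ij.1 then (1:R) else 0) + if k = ij.2 then (1:R) else 0) *
           ((if k = ij.1 then (1:R) else 0) + if k = ij.2 then (1:R) else 0)))
        + (∑ ij ∈ P, -X' ij.1 ij.2 *
            ((if k = ij.1 then (1:R) else 0) * (if k = ij.1 then (1:R) else 0)))
        + (∑ ij ∈ P, -X' ij.1 ij.2 *
            ((if k = ij.2 then (1:R) else 0) * (if k = ij.2 then (1:R) else 0))) = 0 := by
      rw [← Finset.sum_add_distrib, ← Finset.sum_add_distrib]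
      refine Finset.sum_eq_zero fun ij hij => ?_
      have hne : ij.1 ≠ ij.2 := ne_of_lt (Finset.mem_filter.mp hij).2
      by_cases h1 : k = ij.1 <;> by_cases h2 : k = ij.2
      · exact absurd (h1.symm.trans h2) hne
      · simp [h1, h2, hne, hne.symm]
      · simp [h1, h2, hne, hne.symm]
      · simp [h1, h2]
    rw [add_assoc, add_assoc, ← add_assoc
      (∑ ij ∈ P, X' ij.1 ij.2 * (((if k = ij.1 then (1:R) else 0) + if k = ij.2 then (1:R) else 0) *
        ((if k = ij.1 then (1:R) else 0) + if k = ij.2 then (1:R) else 0)))]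
    rw [hT1, hT234, add_zero]
  · have hT1 : (∑ i : n, X' i i * ((if k = i then (1:R) else 0) * (if l = i then (1:R) else 0)))
        = 0 := by
      refine Finset.sum_eq_zero fun i _ => ?_
      by_cases h1 : k = i <;> by_cases h2 : l = i
      · exact absurd (h1.trans h2.symm) hkl
      · simp [h1, h2]
      · simp [h1, h2]
      · simp [h1, h2]
    have hT3 : (∑ ij ∈ P, -X' ij.1 ij.2 *
        ((if k = ij.1 then (1:R) else 0) * (if l = ij.1 then (1:R) else 0))) = 0 := by
      refine Finset.sum_eq_zero fun ij _ => ?_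
      by_cases h1 : k = ij.1 <;> by_cases h2 : l = ij.1
      · exact absurd (h1.trans h2.symm) hkl
      · simp [h1, h2]
      · simp [h1, h2]
      · simp [h1, h2]
    have hT4 : (∑ ij ∈ P, -X' ij.1 ij.2 *
        ((if k = ij.2 then (1:R) else 0) * (if l = ij.2 then (1:R) else 0))) = 0 := by
      refine Finset.sum_eq_zero fun ij _ => ?_
      by_cases h1 : k = ij.2 <;> by_cases h2 : l = ij.2
      · exact absurd (h1.trans h2.symm) hkl
      · simp [h1, h2]
      · simp [h1, h2]
      · simp [h1, h2]
    have hT2 : (∑ ij ∈ P, X' ij.1 ij.2 *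
          (((if k = ij.1 then (1:R) else 0) + if k = ij.2 then (1:R) else 0) *
           ((if l = ij.1 then (1:R) else 0) + if l = ij.2 then (1:R) else 0)))
        = (if k < l then X' k l else 0) + (if l < k then X' l k else 0) := by
      rw [Finset.sum_congr rfl (g := fun ij =>
          (if ij = (k, l) then X' k l else 0) + (if ij = (l, k) then X' l k else 0))
        (fun ij hij => ?_), Finset.sum_add_distrib, Finset.sum_ite_eq' P (k, l),
        Finset.sum_ite_eq' P (l, k)]
      · simp [hP, Finset.mem_filter]
      · have hne : ij.1 ≠ ij.2 := ne_of_lt (Finset.mem_filter.mp hij).2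
        by_cases h1 : k = ij.1 <;> by_cases h2 : k = ij.2 <;>
          by_cases h3 : l = ij.1 <;> by_cases h4 : l = ij.2 <;>
          (simp_all [Prod.ext_iff, hne, hne.symm] <;>
            (first | rfl | ring1 | (split_ifs with hx <;> simp_all) | (intro hx; subst hx; simp_all)))
    rw [hT1, hT2, hT3, hT4, zero_add, add_zero, add_zero]
    rcases lt_trichotomy k l with h | h | h
    · simp [h, asymm h]
    · exact absurd h hkl
    · rw [if_neg (asymm h), if_pos h, zero_add, hsym l k]

section main
/-- For `a ≥ 3` and `l ≥ 2`, in `G = Sp(2l, ℤ/p^aℤ)`, the congruence kernel `K`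
(of reduction mod `p^{a-1}`) centralizes the congruence kernel `L` (of reduction mod
`p^{a-2}`), and any subgroup `U ≤ L` with `L = K·U` satisfies `U ⊇ L`. -/
theorem stmt5 (p : ℕ) (hp : p.Prime) (a : ℕ) (ha : 3 ≤ a) (l : ℕ) (hl : 2 ≤ l) :
    (∀ g h : Matrix.symplecticGroup (Fin l) (ZMod (p ^ a)),
      ((g : Matrix (Fin l ⊕ Fin l) (Fin l ⊕ Fin l) (ZMod (p ^ a))).map
          (ZMod.castHom (pow_dvd_pow p (Nat.sub_le a 1)) (ZMod (p ^ (a - 1)))) = 1) →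
      ((h : Matrix (Fin l ⊕ Fin l) (Fin l ⊕ Fin l) (ZMod (p ^ a))).map
          (ZMod.castHom (pow_dvd_pow p (Nat.sub_le a 2)) (ZMod (p ^ (a - 2)))) = 1) →
      g * h = h * g) ∧
    (∀ U : Subgroup (Matrix.symplecticGroup (Fin l) (ZMod (p ^ a))),
      (∀ u ∈ U, ((u : Matrix (Fin l ⊕ Fin l) (Fin l ⊕ Fin l) (ZMod (p ^ a))).map
          (ZMod.castHom (pow_dvd_pow p (Nat.sub_le a 2)) (ZMod (p ^ (a - 2)))) = 1)) →
      (∀ g : Matrix.symplecticGroup (Fin l) (ZMod (p ^ a)),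
        ((g : Matrix (Fin l ⊕ Fin l) (Fin l ⊕ Fin l) (ZMod (p ^ a))).map
            (ZMod.castHom (pow_dvd_pow p (Nat.sub_le a 2)) (ZMod (p ^ (a - 2)))) = 1) →
        ∃ k : Matrix.symplecticGroup (Fin l) (ZMod (p ^ a)),
          ((k : Matrix (Fin l ⊕ Fin l) (Fin l ⊕ Fin l) (ZMod (p ^ a))).map
              (ZMod.castHom (pow_dvd_pow p (Nat.sub_le a 1)) (ZMod (p ^ (a - 1)))) = 1) ∧
          ∃ u ∈ U, g = k * u) →
      ∀ g : Matrix.symplecticGroup (Fin l) (ZMod (p ^ a)),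
        ((g : Matrix (Fin l ⊕ Fin l) (Fin l ⊕ Fin l) (ZMod (p ^ a))).map
            (ZMod.castHom (pow_dvd_pow p (Nat.sub_le a 2)) (ZMod (p ^ (a - 2)))) = 1) →
        g ∈ U) := by
  classical
  have hp0 : 0 < p := hp.pos
  set R' : Type := ZMod (p ^ a) with hR'
  let JJ : Matrix (Fin l ⊕ Fin l) (Fin l ⊕ Fin l) R' := Matrix.J (Fin l) R'
  have hpa : ((p : R')) ^ a = 0 := by
    rw [← Nat.cast_pow, ZMod.natCast_self]
  have hpow0 : ∀ m : ℕ, a ≤ m → ((p : R')) ^ m = 0 := by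
    intro m hm
    have h1 : ((p : R')) ^ m = ((p : R')) ^ a * ((p : R')) ^ (m - a) := by
      rw [← pow_add]; congr 1; omega
    rw [h1, hpa, zero_mul]
  have hc2 : ((p : R')) ^ (a - 1) * ((p : R')) ^ (a - 1) = 0 := by
    rw [← pow_add]; exact hpow0 _ (by omega)
  have hdc : ((p : R')) ^ (a - 2) * ((p : R')) ^ (a - 1) = 0 := by
    rw [← pow_add]; exact hpow0 _ (by omega)
  have hcd : ((p : R')) ^ (a - 1) * ((p : R')) ^ (a - 2) = 0 := by
    rw [← pow_add]; exact hpow0 _ (by omega)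
  have hpc : (p : R') * ((p : R')) ^ (a - 2) = ((p : R')) ^ (a - 1) := by
    rw [← pow_succ']; congr 1; omega
  have hpc1 : (p : R') * ((p : R')) ^ (a - 1) = 0 := by
    rw [← pow_succ']; exact hpow0 _ (by omega)
  -- Part 1 : K centralizes L
  have hcomm : ∀ g h : Matrix.symplecticGroup (Fin l) R',
      ((g : Matrix (Fin l ⊕ Fin l) (Fin l ⊕ Fin l) R').map
          (ZMod.castHom (pow_dvd_pow p (Nat.sub_le a 1)) (ZMod (p ^ (a - 1)))) = 1) →
      ((h : Matrix (Fin l ⊕ Fin l) (Fin l ⊕ Fin l) R').map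
          (ZMod.castHom (pow_dvd_pow p (Nat.sub_le a 2)) (ZMod (p ^ (a - 2)))) = 1) →
      g * h = h * g := by
    intro g h hg hh
    obtain ⟨X, hX⟩ := (mat_ker_iff hp0 (Nat.sub_le a 1) _).mp hg
    obtain ⟨Y, hY⟩ := (mat_ker_iff hp0 (Nat.sub_le a 2) _).mp hh
    apply Subtype.ext
    have e1 : ((g * h : Matrix.symplecticGroup (Fin l) R') :
        Matrix (Fin l ⊕ Fin l) (Fin l ⊕ Fin l) R') = (g : Matrix _ _ _) * (h : Matrix _ _ _) :=
      rfl
    have e2 : ((h * g : Matrix.symplecticGroup (Fin l) R') :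
        Matrix (Fin l ⊕ Fin l) (Fin l ⊕ Fin l) R') = (h : Matrix _ _ _) * (g : Matrix _ _ _) :=
      rfl
    rw [e1, e2, hX, hY, aux_cross _ _ hcd, aux_cross _ _ hdc]
    abel
  -- elements of K have order dividing p
  have hKpow : ∀ k : Matrix.symplecticGroup (Fin l) R',
      ((k : Matrix (Fin l ⊕ Fin l) (Fin l ⊕ Fin l) R').map
          (ZMod.castHom (pow_dvd_pow p (Nat.sub_le a 1)) (ZMod (p ^ (a - 1)))) = 1) →
      k ^ p = 1 := by
    intro k hk
    obtain ⟨X, hX⟩ := (mat_ker_iff hp0 (Nat.sub_le a 1) _).mp hk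
    apply Subtype.ext
    rw [SubmonoidClass.coe_pow, hX]
    have hNN : (((p : R')) ^ (a - 1) • X) * (((p : R')) ^ (a - 1) • X) = 0 := by
      rw [smul_mul_assoc, mul_smul_comm, smul_smul, hc2, zero_smul]
    rw [aux_one_add_pow _ hNN p, ← nsmul_eq_mul, ← Nat.cast_smul_eq_nsmul R', smul_smul, hpc1,
      zero_smul, add_zero]
    rfl
  -- the "transvection power" lemma
  have hQ : ∀ Lw : List (((Fin l ⊕ Fin l) → R') × R'),
      ∃ ms : List (Matrix.symplecticGroup (Fin l) R'),
        (∀ ℓ ∈ ms, ((ℓ : Matrix (Fin l ⊕ Fin l) (Fin l ⊕ Fin l) R').map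
            (ZMod.castHom (pow_dvd_pow p (Nat.sub_le a 2)) (ZMod (p ^ (a - 2)))) = 1)) ∧
        (((ms.map (· ^ p)).prod : Matrix.symplecticGroup (Fin l) R') :
            Matrix (Fin l ⊕ Fin l) (Fin l ⊕ Fin l) R') =
          1 + ((p : R')) ^ (a - 1) •
            ((Lw.map fun w => w.2 • Matrix.vecMulVec w.1 w.1).sum * JJ) := by
    intro Lw
    induction Lw with
    | nil =>
      refine ⟨[], by simp, ?_⟩
      simp [JJ]
    | cons w Lw ih =>
      obtain ⟨ms, hmsL, hms⟩ := ih
      set A : Matrix (Fin l ⊕ Fin l) (Fin l ⊕ Fin l) R' := Matrix.vecMulVec w.1 w.1 with hA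
      refine ⟨⟨1 + (((p : R')) ^ (a - 2) * w.2) • (A * JJ), Tmat_mem w.1 _⟩ :: ms, ?_, ?_⟩
      · intro ℓ hℓ
        rcases List.mem_cons.mp hℓ with rfl | hℓ
        · exact (mat_ker_iff hp0 (Nat.sub_le a 2) _).mpr
            ⟨w.2 • (A * JJ), by
              show 1 + (((p : R')) ^ (a - 2) * w.2) • (A * JJ) =
                1 + ((p : R')) ^ (a - 2) • (w.2 • (A * JJ))
              rw [mul_smul]⟩
        · exact hmsL ℓ hℓ
      · rw [List.map_cons, List.prod_cons]
        have e1 : ((((⟨1 + (((p : R')) ^ (a - 2) * w.2) • (A * JJ), Tmat_mem w.1 _⟩ :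
            Matrix.symplecticGroup (Fin l) R') ^ p) * (ms.map (· ^ p)).prod :
            Matrix.symplecticGroup (Fin l) R') : Matrix (Fin l ⊕ Fin l) (Fin l ⊕ Fin l) R') =
            ((1 + (((p : R')) ^ (a - 2) * w.2) • (A * JJ)) ^ p) *
              (((ms.map (· ^ p)).prod : Matrix.symplecticGroup (Fin l) R') :
                Matrix (Fin l ⊕ Fin l) (Fin l ⊕ Fin l) R') := rfl
      -- compute the p-th power of the transvection
        have hNN : ((((p : R')) ^ (a - 2) * w.2) • (A * JJ)) *
            ((((p : R')) ^ (a - 2) * w.2) • (A * JJ)) = 0 := by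
          rw [smul_mul_assoc, mul_smul_comm, smul_smul, AJAJ, smul_zero]
        have e2 : ((1 + (((p : R')) ^ (a - 2) * w.2) • (A * JJ)) ^ p) =
            1 + ((p : R')) ^ (a - 1) • ((w.2 • A) * JJ) := by
          rw [aux_one_add_pow _ hNN p, ← nsmul_eq_mul, ← Nat.cast_smul_eq_nsmul R', smul_smul,
            ← mul_assoc, hpc, ← smul_smul, smul_mul_assoc]
        rw [e1, e2, hms, aux_cross _ _ hc2]
        rw [List.map_cons, List.sum_cons, Matrix.add_mul, smul_add]
        abel
  -- every element of K is a product of p-th powers of elements of L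
  have hKdec : ∀ k : Matrix.symplecticGroup (Fin l) R',
      ((k : Matrix (Fin l ⊕ Fin l) (Fin l ⊕ Fin l) R').map
          (ZMod.castHom (pow_dvd_pow p (Nat.sub_le a 1)) (ZMod (p ^ (a - 1)))) = 1) →
      ∃ ms : List (Matrix.symplecticGroup (Fin l) R'),
        (∀ ℓ ∈ ms, ((ℓ : Matrix (Fin l ⊕ Fin l) (Fin l ⊕ Fin l) R').map
            (ZMod.castHom (pow_dvd_pow p (Nat.sub_le a 2)) (ZMod (p ^ (a - 2)))) = 1)) ∧
        (ms.map (· ^ p)).prod = k := by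
    intro k hk
    obtain ⟨X, hX⟩ := (mat_ker_iff hp0 (Nat.sub_le a 1) _).mp hk
    have hmem := k.2
    rw [SymplecticGroup.mem_iff, hX] at hmem
    -- expand the symplectic condition
    have hexp : (1 + ((p : R')) ^ (a - 1) • X) * JJ * (1 + ((p : R')) ^ (a - 1) • X)ᵀ =
        JJ + (((p : R')) ^ (a - 1) • (X * JJ) + ((p : R')) ^ (a - 1) • (JJ * Xᵀ)) := by
      rw [Matrix.transpose_add, Matrix.transpose_one, Matrix.transpose_smul, Matrix.add_mul,
        Matrix.one_mul, smul_mul_assoc, Matrix.mul_add, Matrix.mul_one, Matrix.add_mul,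
        mul_smul_comm, smul_mul_assoc, mul_smul_comm, smul_smul, hc2, zero_smul]
      abel
    rw [hexp] at hmem
    have hzero : ((p : R')) ^ (a - 1) • (X * JJ) + ((p : R')) ^ (a - 1) • (JJ * Xᵀ) = 0 :=
      (add_eq_left).mp hmem
    have hsymm : ((p : R')) ^ (a - 1) • (X * JJ) = (((p : R')) ^ (a - 1) • (X * JJ))ᵀ := by
      rw [Matrix.transpose_smul, Matrix.transpose_mul, J_transpose, Matrix.neg_mul, smul_neg]
      exact eq_neg_of_add_eq_zero_left hzero
    have hsym' : ∀ i j, ((p : R')) ^ (a - 1) * (-(X * JJ)) i j =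
        ((p : R')) ^ (a - 1) * (-(X * JJ)) j i := by
      intro i j
      have h := congrFun (congrFun hsymm i) j
      simp only [Matrix.smul_apply, Matrix.transpose_apply, smul_eq_mul] at h
      simp only [Matrix.neg_apply, mul_neg, h]
      linear_combination -h
    obtain ⟨Lw, hLw⟩ := decomp (((p : R')) ^ (a - 1)) (-(X * JJ)) hsym'
    obtain ⟨ms, hms1, hms2⟩ := hQ Lw
    refine ⟨ms, hms1, Subtype.ext ?_⟩
    rw [hms2, hX, ← smul_mul_assoc, hLw, smul_mul_assoc, Matrix.neg_mul, Matrix.mul_assoc,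
      J_squared, Matrix.mul_neg, Matrix.mul_one, neg_neg]
  -- assemble
  refine ⟨hcomm, ?_⟩
  intro U hUL hdecU g hg
  have hKU : ∀ k : Matrix.symplecticGroup (Fin l) R',
      ((k : Matrix (Fin l ⊕ Fin l) (Fin l ⊕ Fin l) R').map
          (ZMod.castHom (pow_dvd_pow p (Nat.sub_le a 1)) (ZMod (p ^ (a - 1)))) = 1) →
      k ∈ U := by
    intro k hk
    obtain ⟨ms, hms, hprod⟩ := hKdec k hk
    rw [← hprod]
    refine list_prod_mem ?_
    intro x hx
    rw [List.mem_map] at hx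
    obtain ⟨ℓ, hmem, rfl⟩ := hx
    obtain ⟨kk, hkk, u, hu, hℓ⟩ := hdecU ℓ (hms ℓ hmem)
    rw [hℓ]
    have hcom : Commute kk u := hcomm kk u hkk (hUL u hu)
    rw [hcom.mul_pow, hKpow kk hkk, one_mul]
    exact pow_mem hu p
  obtain ⟨kk, hkk, u, hu, rfl⟩ := hdecU g hg
  exact mul_mem (hKU kk hkk) hu
end main
end

section
/- Let n > 2 and let H be a subgroup of SL(n,ℤ). (a) If m and m' are positive integers with m dividing m', then δ_H(m) divides δ_H(m'). (b) If H has level M, then δ_H(M) equals the index of H in SL(n,ℤ); moreover for every m ≥ 1, δ_H(m) divides δ_H(M), and δ_H(m) = δ_H(M) if and only if M divides m. -/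
set_option linter.unusedSectionVars false
open scoped Classical
set_option maxHeartbeats 1000000

namespace SLlift
open Matrix Matrix.TransvectionStruct

variable {n : Type*} [DecidableEq n] [Fintype n] {R : Type*} [CommRing R]
  {S : Type*} [CommRing S]

/-- `M` is a product of transvections. -/
def IsTP (M : Matrix n n R) : Prop :=
  ∃ L : List (TransvectionStruct n R), M = (L.map toMatrix).prod

lemma IsTP.one : IsTP (1 : Matrix n n R) := ⟨[], by simp⟩

lemma IsTP.mul {M N : Matrix n n R} (hM : IsTP M) (hN : IsTP N) : IsTP (M * N) := by
  obtain ⟨L, rfl⟩ := hM; obtain ⟨L', rfl⟩ := hN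
  exact ⟨L ++ L', by simp⟩

lemma IsTP.transvection {i j : n} (h : i ≠ j) (c : R) : IsTP (Matrix.transvection i j c) :=
  ⟨[⟨i, j, h, c⟩], by simp⟩

lemma IsTP.det {M : Matrix n n R} (h : IsTP M) : M.det = 1 := by
  obtain ⟨L, rfl⟩ := h
  induction L with
  | nil => simp
  | cons t L ih => simp [Matrix.det_mul, ih]

/-- complementary projection -/
def P2 (i j : n) : Matrix n n R := Matrix.diagonal (fun k => if k = i ∨ k = j then 0 else 1)

lemma diag_mul_std (f : n → R) (a b : n) (c : R) :
    Matrix.diagonal f * Matrix.single a b c = Matrix.single a b (f a * c) := by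
  ext x y
  rw [Matrix.diagonal_mul]
  by_cases h : a = x ∧ b = y
  · obtain ⟨rfl, rfl⟩ := h; simp
  · simp [h]

lemma std_mul_diag (f : n → R) (a b : n) (c : R) :
    Matrix.single a b c * Matrix.diagonal f = Matrix.single a b (c * f b) := by
  ext x y
  rw [Matrix.mul_diagonal]
  by_cases h : a = x ∧ b = y
  · obtain ⟨rfl, rfl⟩ := h; simp [mul_comm]
  · simp [h]

lemma P2_mul_P2 (i j : n) : (P2 i j : Matrix n n R) * P2 i j = P2 i j := by
  rw [P2, diagonal_mul_diagonal]
  apply congrArg; funext k; by_cases h : k = i ∨ k = j <;> simp [h]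

/-- a matrix supported on the `{i,j} × {i,j}` block, with identity elsewhere. -/
def emb2 (i j : n) (a b c d : R) : Matrix n n R :=
  Matrix.single i i a + Matrix.single i j b + Matrix.single j i c + Matrix.single j j d + P2 i j

lemma emb2_mul {i j : n} (h : i ≠ j) (a b c d a' b' c' d' : R) :
    emb2 i j a b c d * emb2 i j a' b' c' d' =
      emb2 i j (a * a' + b * c') (a * b' + b * d') (c * a' + d * c') (c * b' + d * d') := by
  unfold emb2 P2
  simp only [Matrix.add_mul, Matrix.mul_add, Matrix.single_mul_single_same,
    Matrix.single_mul_single_of_ne _ _ _ _ h, Matrix.single_mul_single_of_ne _ _ _ _ h.symm,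
    diag_mul_std, std_mul_diag, diagonal_mul_diagonal, Matrix.single_add]
  simp only [eq_self_iff_true, true_or, or_true, if_true, if_pos, zero_mul, mul_zero,
    Matrix.single_zero]
  have : ∀ k : n, ((if k = i ∨ k = j then (0:R) else 1) * if k = i ∨ k = j then 0 else 1)
      = if k = i ∨ k = j then 0 else 1 := by
    intro k; by_cases hk : k = i ∨ k = j <;> simp [hk]
  simp only [this]
  abel


lemma one_eq_emb {i j : n} (h : i ≠ j) : (1 : Matrix n n R) =
    Matrix.single i i 1 + Matrix.single j j 1 + P2 i j := by
  ext x y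
  rcases eq_or_ne x y with rfl | hxy
  · rcases eq_or_ne x i with rfl | hxi
    · simp [P2, Matrix.diagonal_apply, Matrix.one_apply, h, h.symm]
    · rcases eq_or_ne x j with rfl | hxj
      · simp [P2, Matrix.diagonal_apply, Matrix.one_apply, hxi, Ne.symm hxi]
      · simp [P2, Matrix.diagonal_apply, Matrix.one_apply, hxi, hxj, Ne.symm hxi, Ne.symm hxj]
  · have h1 : ¬(i = x ∧ i = y) := by rintro ⟨rfl, rfl⟩; exact hxy rfl
    have h2 : ¬(j = x ∧ j = y) := by rintro ⟨rfl, rfl⟩; exact hxy rfl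
    simp [P2, Matrix.diagonal_apply, Matrix.one_apply, hxy, h1, h2]

lemma emb2_e {i j : n} (h : i ≠ j) (c : R) : emb2 i j 1 c 0 1 = Matrix.transvection i j c := by
  rw [Matrix.transvection, one_eq_emb h, emb2]
  simp only [Matrix.single_zero]
  abel

lemma emb2_f {i j : n} (h : i ≠ j) (c : R) : emb2 i j 1 0 c 1 = Matrix.transvection j i c := by
  rw [Matrix.transvection, one_eq_emb h, emb2]
  simp only [Matrix.single_zero]
  abel

lemma emb2_diag {i j : n} (h : i ≠ j) (a d : R) :
    emb2 i j a 0 0 d = Matrix.diagonal (fun k => if k = i then a else if k = j then d else 1) := by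
  ext x y
  rcases eq_or_ne x y with rfl | hxy
  · rcases eq_or_ne x i with rfl | hxi
    · simp [emb2, P2, Matrix.diagonal_apply, h, h.symm]
    · rcases eq_or_ne x j with rfl | hxj
      · simp [emb2, P2, Matrix.diagonal_apply, hxi, h.symm, Ne.symm hxi]
      · simp [emb2, P2, Matrix.diagonal_apply, hxi, hxj, Ne.symm hxi, Ne.symm hxj]
  · have h1 : ¬(i = x ∧ i = y) := by rintro ⟨rfl, rfl⟩; exact hxy rfl
    have h2 : ¬(j = x ∧ j = y) := by rintro ⟨rfl, rfl⟩; exact hxy rfl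
    simp [emb2, P2, Matrix.diagonal_apply, hxy, h1, h2]

lemma emb2_congr {i j : n} {a b c d a' b' c' d' : R} (ha : a = a') (hb : b = b')
    (hc : c = c') (hd : d = d') : emb2 i j a b c d = emb2 i j a' b' c' d' := by
  rw [ha, hb, hc, hd]

lemma isTP_emb2_units {i j : n} (h : i ≠ j) (u v : R) (huv : u * v = 1) :
    IsTP (emb2 i j u 0 0 v) := by
  have key : emb2 i j u 0 0 v =
      emb2 i j 1 u 0 1 * emb2 i j 1 0 (-v) 1 * emb2 i j 1 u 0 1 * emb2 i j 1 (-1) 0 1 *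
        emb2 i j 1 0 1 1 * emb2 i j 1 (-1) 0 1 := by
    rw [emb2_mul h, emb2_mul h, emb2_mul h, emb2_mul h, emb2_mul h]
    refine emb2_congr ?_ ?_ ?_ ?_
    · linear_combination u * huv
    · linear_combination -huv
    · linear_combination huv
    · linear_combination (0 : R) * huv
  rw [key]
  simp only [emb2_e h, emb2_f h]
  exact (((((IsTP.transvection h _).mul (IsTP.transvection h.symm _)).mul
    (IsTP.transvection h _)).mul (IsTP.transvection h _)).mul
    (IsTP.transvection h.symm _)).mul (IsTP.transvection h _)


lemma isTP_diagonal_aux : ∀ (k : ℕ) (d : n → R),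
    (Finset.univ.filter fun i => d i ≠ 1).card ≤ k →
    (∀ i, IsUnit (d i)) → (∏ i, d i) = 1 → IsTP (Matrix.diagonal d) := by
  intro k
  induction k with
  | zero =>
    intro d hc _ _
    have he : (Finset.univ.filter fun i => d i ≠ 1) = ∅ := Finset.card_eq_zero.mp (le_antisymm hc (Nat.zero_le _))
    have hd : ∀ i, d i = 1 := by
      intro i
      by_contra hi
      have : i ∈ Finset.univ.filter fun i => d i ≠ 1 := by simp [hi]
      simp [he] at this
    have : d = fun _ => 1 := funext hd
    rw [this, Matrix.diagonal_one]
    exact IsTP.one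
  | succ k ih =>
    intro d hc hu hp
    by_cases hck : (Finset.univ.filter fun i => d i ≠ 1).card ≤ k
    · exact ih d hck hu hp
    · have hne : (Finset.univ.filter fun i => d i ≠ 1).Nonempty := by
        rw [← Finset.card_pos]; omega
      obtain ⟨a, ha⟩ := hne
      have hda : d a ≠ 1 := (Finset.mem_filter.mp ha).2
      have hb : ∃ b, b ≠ a ∧ d b ≠ 1 := by
        by_contra hco
        push_neg at hco
        have : ∏ x, d x = d a := Finset.prod_eq_single a (fun c _ hc => hco c hc) (by simp)
        exact hda (this ▸ hp)
      obtain ⟨b, hba, hdb⟩ := hb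
      obtain ⟨u, hu'⟩ := hu a
      set d' : n → R := fun x => if x = a then 1 else if x = b then d a * d b else d x with hd'
      have hab : a ≠ b := hba.symm
      have key : Matrix.diagonal d = emb2 a b (d a) 0 0 ((u⁻¹ : Rˣ) : R) * Matrix.diagonal d' := by
        rw [emb2_diag hab, Matrix.diagonal_mul_diagonal]
        apply congrArg; funext x
        rcases eq_or_ne x a with rfl | hxa
        · simp [hd']
        · rcases eq_or_ne x b with rfl | hxb
          · simp only [hd']
            rw [if_neg hba]
            simp only [if_true]
            rw [← hu', if_neg hba, ← mul_assoc, Units.inv_mul, one_mul]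
          · simp [hd', hxa, hxb]
      have hprod' : ∏ x, d' x = 1 := by
        have hbmem : b ∈ Finset.univ.erase a := Finset.mem_erase.mpr ⟨hba, Finset.mem_univ b⟩
        have h1 : ∏ x, d' x = d' a * ∏ x ∈ Finset.univ.erase a, d' x :=
          (Finset.mul_prod_erase _ _ (Finset.mem_univ a)).symm
        have h2 : ∏ x ∈ Finset.univ.erase a, d' x
            = d' b * ∏ x ∈ (Finset.univ.erase a).erase b, d' x :=
          (Finset.mul_prod_erase _ _ hbmem).symm
        have h3 : ∏ x ∈ (Finset.univ.erase a).erase b, d' x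
            = ∏ x ∈ (Finset.univ.erase a).erase b, d x := by
          apply Finset.prod_congr rfl
          intro x hx
          rw [Finset.mem_erase, Finset.mem_erase] at hx
          simp [hd', hx.1, hx.2.1]
        have h4 : ∏ x, d x = d a * (d b * ∏ x ∈ (Finset.univ.erase a).erase b, d x) := by
          rw [Finset.mul_prod_erase _ _ hbmem, Finset.mul_prod_erase _ _ (Finset.mem_univ a)]
        have h5 : d' a = 1 := by simp [hd']
        have h6 : d' b = d a * d b := by simp [hd', hba]
        rw [h1, h2, h3, h5, h6, one_mul, mul_assoc, ← h4, hp]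
      have hu'' : ∀ x, IsUnit (d' x) := by
        intro x
        rcases eq_or_ne x a with rfl | hxa
        · simp [hd']
        · rcases eq_or_ne x b with rfl | hxb
          · have h6 : d' x = d a * d x := by simp [hd', hba]
            rw [h6]; exact (hu a).mul (hu x)
          · have h7 : d' x = d x := by simp [hd', hxa, hxb]
            rw [h7]; exact hu x
      have hcard : (Finset.univ.filter fun x => d' x ≠ 1).card ≤ k := by
        have hsub : (Finset.univ.filter fun x => d' x ≠ 1)
            ⊆ (Finset.univ.filter fun x => d x ≠ 1).erase a := by
          intro x hx
          have hx' : d' x ≠ 1 := (Finset.mem_filter.mp hx).2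
          have hxa : x ≠ a := by
            rintro rfl; exact hx' (by simp [hd'])
          refine Finset.mem_erase.mpr ⟨hxa, Finset.mem_filter.mpr ⟨Finset.mem_univ x, ?_⟩⟩
          rcases eq_or_ne x b with rfl | hxb
          · exact hdb
          · have h7 : d' x = d x := by simp [hd', hxa, hxb]
            rw [← h7]; exact hx'
        have h8 := Finset.card_le_card hsub
        have h9 := Finset.card_erase_of_mem ha
        omega
      rw [key]
      have huv : (d a) * ((u⁻¹ : Rˣ) : R) = 1 := by
        rw [← hu']; exact u.mul_inv
      exact (isTP_emb2_units hab _ _ huv).mul (ih d' hcard hu'' hprod')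

lemma isTP_diagonal (d : n → R) (hu : ∀ i, IsUnit (d i)) (hp : (∏ i, d i) = 1) :
    IsTP (Matrix.diagonal d) :=
  isTP_diagonal_aux _ d le_rfl hu hp


lemma std_mul_eq_zero {N : Matrix n n R} (hN : ∀ a b c d, N a b * N c d = 0) (i j : n) :
    Matrix.single i j (N i j) * N = 0 := by
  ext x y
  rcases eq_or_ne x i with rfl | hxi
  · rw [Matrix.single_mul_apply_same, Matrix.zero_apply]
    exact hN x j j y
  · rw [Matrix.single_mul_apply_of_ne _ _ _ _ _ hxi, Matrix.zero_apply]

lemma isTP_unipotent_aux : ∀ (k : ℕ) (N : Matrix n n R),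
    (∀ a b c d, N a b * N c d = 0) → Matrix.det (1 + N) = 1 →
    (Finset.univ.filter fun p : n × n => p.1 ≠ p.2 ∧ N p.1 p.2 ≠ 0).card ≤ k →
    IsTP (1 + N) := by
  intro k
  induction k with
  | zero =>
    intro N hN hdet hc
    have he : (Finset.univ.filter fun p : n × n => p.1 ≠ p.2 ∧ N p.1 p.2 ≠ 0) = ∅ :=
      Finset.card_eq_zero.mp (le_antisymm hc (Nat.zero_le _))
    have hoff : ∀ a b, a ≠ b → N a b = 0 := by
      intro a b hab
      by_contra habn
      have : (a, b) ∈ (Finset.univ.filter fun p : n × n => p.1 ≠ p.2 ∧ N p.1 p.2 ≠ 0) := by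
        simp [hab, habn]
      simp [he] at this
    have hDeq : (1 : Matrix n n R) + N = Matrix.diagonal (fun i => 1 + N i i) := by
      ext a b
      rcases eq_or_ne a b with rfl | hab
      · simp [Matrix.diagonal_apply, Matrix.one_apply, Matrix.add_apply]
      · simp [Matrix.diagonal_apply, Matrix.one_apply, Matrix.add_apply, hab, hoff a b hab]
    rw [hDeq]
    refine isTP_diagonal _ (fun i => ?_) ?_
    · refine IsUnit.of_mul_eq_one (1 - N i i) ?_
      have := hN i i i i
      linear_combination -this
    · rw [hDeq] at hdet
      rw [Matrix.det_diagonal] at hdet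
      exact hdet
  | succ k ih =>
    intro N hN hdet hc
    by_cases hck : (Finset.univ.filter fun p : n × n => p.1 ≠ p.2 ∧ N p.1 p.2 ≠ 0).card ≤ k
    · exact ih N hN hdet hck
    · have hne : (Finset.univ.filter fun p : n × n => p.1 ≠ p.2 ∧ N p.1 p.2 ≠ 0).Nonempty := by
        rw [← Finset.card_pos]; omega
      obtain ⟨⟨i, j⟩, hijmem⟩ := hne
      obtain ⟨-, hij0, hNij0⟩ := Finset.mem_filter.mp hijmem
      have hij : i ≠ j := hij0
      have hNij : N i j ≠ 0 := hNij0
      set N' : Matrix n n R := N - Matrix.single i j (N i j) with hN'def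
      have hstd_neg : Matrix.single i j (-(N i j)) = -Matrix.single i j (N i j) := by
        ext x y
        by_cases hxy : i = x ∧ j = y
        · obtain ⟨rfl, rfl⟩ := hxy; simp
        · simp [Matrix.single_apply_of_ne (h := hxy)]
      have hprod : Matrix.transvection i j (-(N i j)) * (1 + N) = 1 + N' := by
        rw [Matrix.transvection, hstd_neg, hN'def]
        rw [Matrix.add_mul, Matrix.one_mul, Matrix.mul_add, Matrix.mul_one, Matrix.neg_mul,
          std_mul_eq_zero hN]
        abel
      have hval : ∀ a b, N' a b = N a b ∨ N' a b = 0 := by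
        intro a b
        by_cases hab : i = a ∧ j = b
        · right; obtain ⟨rfl, rfl⟩ := hab; simp [hN'def, Matrix.sub_apply]
        · left; simp [hN'def, Matrix.sub_apply, Matrix.single_apply_of_ne (h := hab)]
      have hN'prop : ∀ a b c d, N' a b * N' c d = 0 := by
        intro a b c d
        rcases hval a b with h1 | h1 <;> rcases hval c d with h2 | h2 <;>
          rw [h1, h2] <;> simp [hN a b c d]
      have hdet' : Matrix.det (1 + N') = 1 := by
        rw [← hprod, Matrix.det_mul, Matrix.det_transvection_of_ne _ _ hij, one_mul, hdet]
      have hcard' : (Finset.univ.filter fun p : n × n => p.1 ≠ p.2 ∧ N' p.1 p.2 ≠ 0).card ≤ k := by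
        have hsub : (Finset.univ.filter fun p : n × n => p.1 ≠ p.2 ∧ N' p.1 p.2 ≠ 0)
            ⊆ (Finset.univ.filter fun p : n × n => p.1 ≠ p.2 ∧ N p.1 p.2 ≠ 0).erase (i, j) := by
          rintro ⟨a, b⟩ hab
          obtain ⟨-, hab1, hab2⟩ := Finset.mem_filter.mp hab
          have habij : (a, b) ≠ (i, j) := by
            rintro h
            obtain ⟨rfl, rfl⟩ := Prod.mk.injEq .. ▸ Prod.ext_iff.mp h
            exact hab2 (by simp [hN'def, Matrix.sub_apply])
          refine Finset.mem_erase.mpr ⟨habij, Finset.mem_filter.mpr ⟨Finset.mem_univ _, hab1, ?_⟩⟩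
          rcases hval a b with h1 | h1
          · rw [← h1]; exact hab2
          · exact absurd h1 hab2
        have h8 := Finset.card_le_card hsub
        have h9 := Finset.card_erase_of_mem hijmem
        omega
      have hTP' : IsTP (1 + N') := ih N' hN'prop hdet' hcard'
      have hfin : Matrix.transvection i j (N i j) * (1 + N') = 1 + N := by
        rw [← hprod, ← Matrix.mul_assoc, Matrix.transvection_mul_transvection_same i j hij,
          add_neg_cancel, Matrix.transvection_zero, Matrix.one_mul]
      rw [← hfin]
      exact (IsTP.transvection hij _).mul hTP'

lemma isTP_of_det_one_field {K : Type*} [Field K] (M : Matrix n n K) (h : M.det = 1) :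
    IsTP M := by
  obtain ⟨L, L', D, rfl⟩ := Matrix.Pivot.exists_list_transvec_mul_diagonal_mul_list_transvec M
  have hD : ∏ i, D i = 1 := by
    have h2 := h
    rw [Matrix.det_mul, Matrix.det_mul, Matrix.TransvectionStruct.det_toMatrix_prod,
      Matrix.TransvectionStruct.det_toMatrix_prod, Matrix.det_diagonal, one_mul, mul_one] at h2
    exact h2
  have hunit : ∀ i, IsUnit (D i) := by
    intro i
    rw [isUnit_iff_ne_zero]
    intro h0
    rw [Finset.prod_eq_zero (Finset.mem_univ i) h0] at hD
    exact zero_ne_one hD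
  exact IsTP.mul (IsTP.mul ⟨L, rfl⟩ (isTP_diagonal D hunit hD)) ⟨L', rfl⟩


/-- Map a transvection structure along a ring hom. -/
def TSmap (f : R →+* S) (t : TransvectionStruct n R) : TransvectionStruct n S :=
  ⟨t.i, t.j, t.hij, f t.c⟩

lemma transvection_map (f : R →+* S) (i j : n) (c : R) :
    (Matrix.transvection i j c).map f = Matrix.transvection i j (f c) := by
  ext x y
  by_cases hxy : i = x ∧ j = y
  · obtain ⟨rfl, rfl⟩ := hxy
    simp [Matrix.transvection, Matrix.map_apply, Matrix.add_apply, Matrix.one_apply]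
  · simp only [Matrix.transvection, Matrix.map_apply, Matrix.add_apply,
      Matrix.single_apply_of_ne (h := hxy), add_zero, map_add,
      Matrix.single_apply_of_ne (c := f c) (h := hxy)]
    rcases eq_or_ne x y with rfl | hxy'
    · simp
    · simp [Matrix.one_apply, hxy']

lemma toMatrix_TSmap (f : R →+* S) (t : TransvectionStruct n R) :
    (TSmap f t).toMatrix = t.toMatrix.map f := by
  rcases t with ⟨i, j, hij, c⟩
  rw [TSmap, toMatrix_mk, toMatrix_mk, transvection_map]

lemma prod_map (f : R →+* S) (L : List (TransvectionStruct n R)) :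
    ((L.map (TSmap f)).map toMatrix).prod = ((L.map toMatrix).prod).map f := by
  induction L with
  | nil => simp [Matrix.map_one f f.map_zero f.map_one]
  | cons t L ih =>
    simp only [List.map_cons, List.prod_cons, ih, toMatrix_TSmap, Matrix.map_mul]

lemma prod_map_eq_one (f : R →+* S) (L : List (TransvectionStruct n R))
    (h : ∀ t ∈ L, f t.c = 0) : (((L.map toMatrix).prod).map f) = 1 := by
  rw [← prod_map]
  induction L with
  | nil => simp
  | cons t L ih =>
    simp only [List.map_cons, List.prod_cons]
    have h1 : (TSmap f t).toMatrix = 1 := by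
      rcases t with ⟨i, j, hij, c⟩
      have : f c = 0 := h _ (List.mem_cons_self)
      rw [TSmap, toMatrix_mk]
      rw [this, Matrix.transvection_zero]
    rw [h1, Matrix.one_mul]
    exact ih (fun t ht => h t (List.mem_cons_of_mem _ ht))

/-- Key factorization: if the image of `A` under `f` is a product of transvections whose
coefficients come from a section `σ`, then `A = P * B` with `P` a product of transvections and
`B ≡ 1 mod f`; moreover for any auxiliary hom `g` killing `σ`, `P, B` behave well. -/
lemma lift_factor (f : R →+* S) (σ : S → R) (hσ : ∀ s, f (σ s) = s)
    (A : Matrix n n R) (hA : IsTP (A.map f)) :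
    ∃ P B : Matrix n n R, A = P * B ∧ IsTP P ∧ B.map f = 1 ∧ B.det = A.det ∧
      ∀ (T : Type) [CommRing T] (g : R →+* T), (∀ s, g (σ s) = 0) →
        P.map g = 1 ∧ B.map g = A.map g := by
  obtain ⟨L', hL'⟩ := hA
  set L : List (TransvectionStruct n R) := L'.map (fun t => ⟨t.i, t.j, t.hij, σ t.c⟩) with hL
  have hLmap : L.map (TSmap f) = L' := by
    rw [hL, List.map_map]
    have : (TSmap f ∘ fun t : TransvectionStruct n S => (⟨t.i, t.j, t.hij, σ t.c⟩ :
        TransvectionStruct n R)) = id := by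
      funext t; rcases t with ⟨i, j, hij, c⟩; simp [TSmap, hσ]
    rw [this, List.map_id]
  set P : Matrix n n R := (L.map toMatrix).prod with hP
  set Q : Matrix n n R := ((L.reverse.map TransvectionStruct.inv).map toMatrix).prod with hQ
  have hQP : Q * P = 1 := by
    have h0 := reverse_inv_prod_mul_prod (L := L)
    rwa [← List.map_map] at h0
  have hPQ : P * Q = 1 := by
    have h0 := prod_mul_reverse_inv_prod (L := L)
    rwa [← List.map_map] at h0
  have hPmapf : P.map f = A.map f := by
    rw [hP, ← prod_map, hLmap, ← hL']
  refine ⟨P, Q * A, ?_, ⟨L, rfl⟩, ?_, ?_, ?_⟩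
  · rw [← Matrix.mul_assoc, hPQ, Matrix.one_mul]
  · rw [Matrix.map_mul, ← hPmapf, ← Matrix.map_mul, hQP, Matrix.map_one f f.map_zero f.map_one]
  · have hQdet : Q.det = 1 := IsTP.det ⟨_, rfl⟩
    rw [Matrix.det_mul, hQdet, one_mul]
  · intro T _ g hg
    have hPg : P.map g = 1 := by
      refine prod_map_eq_one g L (fun t ht => ?_)
      rw [hL] at ht
      obtain ⟨t', -, rfl⟩ := List.mem_map.mp ht
      exact hg t'.c
    have hQg : Q.map g = 1 := by
      refine prod_map_eq_one g _ (fun t ht => ?_)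
      obtain ⟨t'', ht'', rfl⟩ := List.mem_map.mp ht
      have ht2 := List.mem_reverse.mp ht''
      rw [hL] at ht2
      obtain ⟨t', -, rfl⟩ := List.mem_map.mp ht2
      simp only [TransvectionStruct.inv]
      rw [map_neg, hg t'.c, neg_zero]
    exact ⟨hPg, by rw [Matrix.map_mul, hQg, Matrix.one_mul]⟩


lemma entry_sub_one_map_zero (f : R →+* S) (B : Matrix n n R) (hB : B.map f = 1) (x y : n) :
    f (B x y - (1 : Matrix n n R) x y) = 0 := by
  have h1 : (B.map f) x y = (1 : Matrix n n S) x y := by rw [hB]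
  rw [Matrix.map_apply] at h1
  have h2 : f ((1 : Matrix n n R) x y) = (1 : Matrix n n S) x y := by
    rcases eq_or_ne x y with rfl | hxy
    · simp [Matrix.one_apply]
    · simp [Matrix.one_apply, hxy]
  rw [map_sub, h1, h2, sub_self]

lemma zmod_dvd_val_of_cast_eq_zero {m m' : ℕ} [NeZero m] [NeZero m'] (hdvd : m' ∣ m)
    (x : ZMod m) (hx : ZMod.castHom hdvd (ZMod m') x = 0) : m' ∣ x.val := by
  rw [← ZMod.natCast_eq_zero_iff]
  calc ((x.val : ℕ) : ZMod m') = ZMod.castHom hdvd (ZMod m') ((x.val : ℕ) : ZMod m) :=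
        (map_natCast _ _).symm
    _ = ZMod.castHom hdvd (ZMod m') x := by rw [ZMod.natCast_zmod_val]
    _ = 0 := hx

lemma zmod_mul_eq_zero {m m' : ℕ} [NeZero m] [NeZero m'] (hdvd : m' ∣ m) (hsq : m ∣ m' * m')
    (x y : ZMod m) (hx : ZMod.castHom hdvd (ZMod m') x = 0)
    (hy : ZMod.castHom hdvd (ZMod m') y = 0) : x * y = 0 := by
  have h1 := zmod_dvd_val_of_cast_eq_zero hdvd x hx
  have h2 := zmod_dvd_val_of_cast_eq_zero hdvd y hy
  have h3 : m ∣ x.val * y.val := hsq.trans (Nat.mul_dvd_mul h1 h2)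
  calc x * y = ((x.val : ℕ) : ZMod m) * ((y.val : ℕ) : ZMod m) := by
        rw [ZMod.natCast_zmod_val, ZMod.natCast_zmod_val]
    _ = ((x.val * y.val : ℕ) : ZMod m) := by push_cast; ring
    _ = 0 := (ZMod.natCast_eq_zero_iff _ _).mpr h3

lemma isTP_of_map_eq_one {m m' : ℕ} [NeZero m] [NeZero m'] (hdvd : m' ∣ m) (hsq : m ∣ m' * m')
    (B : Matrix n n (ZMod m)) (hB : B.map (ZMod.castHom hdvd (ZMod m')) = 1)
    (hdet : B.det = 1) : IsTP B := by
  set N : Matrix n n (ZMod m) := B - 1 with hN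
  have hBN : B = 1 + N := by rw [hN]; abel
  have hker : ∀ x y, ZMod.castHom hdvd (ZMod m') (N x y) = 0 := by
    intro x y
    have := entry_sub_one_map_zero (ZMod.castHom hdvd (ZMod m')) B hB x y
    rwa [hN, Matrix.sub_apply]
  have hNprop : ∀ x y z w, N x y * N z w = 0 := fun x y z w =>
    zmod_mul_eq_zero hdvd hsq _ _ (hker x y) (hker z w)
  rw [hBN]
  exact isTP_unipotent_aux _ N hNprop (hBN ▸ hdet) le_rfl

lemma isTP_zmod : ∀ m : ℕ, 1 ≤ m → ∀ A : Matrix n n (ZMod m), A.det = 1 → IsTP A := by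
  intro m
  induction m using Nat.strong_induction_on with
  | _ m ih =>
    intro hm A hA
    haveI : NeZero m := ⟨by omega⟩
    rcases eq_or_lt_of_le hm with h1 | h2
    · -- m = 1
      have hsub : Subsingleton (ZMod m) := by
        subst h1; infer_instance
      have : A = 1 := Subsingleton.elim _ _
      rw [this]; exact IsTP.one
    · -- m ≥ 2
      have hp : m.minFac.Prime := Nat.minFac_prime (by omega)
      set p := m.minFac with hp_def
      set k := m.factorization p with hk_def
      have hpm : p ∣ m := Nat.minFac_dvd m
      have hm0 : m ≠ 0 := by omega
      have hk1 : 1 ≤ k := hp.factorization_pos_of_dvd hm0 hpm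
      set a := p ^ k with ha_def
      set b := m / a with hb_def
      have hab : a * b = m := Nat.ordProj_mul_ordCompl_eq_self m p
      have hco : Nat.Coprime a b := (Nat.coprime_ordCompl hp hm0).pow_left k
      have hp2 : 2 ≤ p := hp.two_le
      have ha1 : 2 ≤ a := by
        calc 2 ≤ p := hp2
        _ = p ^ 1 := (pow_one p).symm
        _ ≤ p ^ k := Nat.pow_le_pow_right (by omega) hk1
      have hb1 : 1 ≤ b := by
        rcases Nat.eq_zero_or_pos b with h0 | h0
        · rw [h0, mul_zero] at hab; omega
        · exact h0
      rcases eq_or_lt_of_le hb1 with hb2 | hb2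
      · -- b = 1 : m = p ^ k
        have hma : m = p ^ k := by rw [← hab, ← hb2, mul_one]
        rcases eq_or_lt_of_le hk1 with hk2 | hk2
        · -- k = 1 : m prime
          have hmp : m = p := by rw [hma, ← hk2, pow_one]
          haveI : Fact m.Prime := ⟨hmp ▸ hp⟩
          exact isTP_of_det_one_field A hA
        · -- k ≥ 2
          set m' := p ^ (k - 1) with hm'_def
          haveI : NeZero m' := ⟨pow_ne_zero _ (by omega)⟩
          have hdvd : m' ∣ m := by
            rw [hma]; exact pow_dvd_pow p (by omega)
          have hsq : m ∣ m' * m' := by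
            rw [hma, ← pow_add]
            exact pow_dvd_pow p (by omega)
          have hm'lt : m' < m := by
            rw [hma, hm'_def]
            exact Nat.pow_lt_pow_right (by omega) (by omega)
          set π := ZMod.castHom hdvd (ZMod m') with hπ
          have hdet' : (A.map π).det = 1 := by
            rw [← RingHom.mapMatrix_apply, ← RingHom.map_det, hA, _root_.map_one]
          have hTP' : IsTP (A.map π) := ih m' hm'lt (Nat.one_le_iff_ne_zero.mpr
            (pow_ne_zero _ (by omega))) _ hdet'
          obtain ⟨P, B, hPB, hP, hBmap, hBdet, -⟩ := lift_factor π
            (fun s => ((s.val : ℕ) : ZMod m))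
            (fun s => by rw [map_natCast, ZMod.natCast_zmod_val]) A hTP'
          have hBTP : IsTP B := isTP_of_map_eq_one hdvd hsq B hBmap (by rw [hBdet, hA])
          rw [hPB]
          exact hP.mul hBTP
      · -- b ≥ 2 : CRT case
        haveI : NeZero a := ⟨by omega⟩
        haveI : NeZero b := ⟨by omega⟩
        have hadvd : a ∣ m := ⟨b, hab.symm⟩
        have hbdvd : b ∣ m := ⟨a, by rw [← hab, mul_comm]⟩
        have halt : a < m := by nlinarith [hab]
        have hblt : b < m := by nlinarith [hab]
        set π₁ := ZMod.castHom hadvd (ZMod a) with hπ₁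
        set π₂ := ZMod.castHom hbdvd (ZMod b) with hπ₂
        -- step 1
        have hdet1 : (A.map π₁).det = 1 := by
          rw [← RingHom.mapMatrix_apply, ← RingHom.map_det, hA, _root_.map_one]
        have hTP1 : IsTP (A.map π₁) := ih a halt (by omega) _ hdet1
        obtain ⟨P₁, B₁, hPB₁, hP₁, hB₁map, hB₁det, -⟩ := lift_factor π₁
          (fun s => ((s.val : ℕ) : ZMod m))
          (fun s => by rw [map_natCast, ZMod.natCast_zmod_val]) A hTP1
        -- step 2
        have hdet2 : (B₁.map π₂).det = 1 := by
          rw [← RingHom.mapMatrix_apply, ← RingHom.map_det, hB₁det, hA, _root_.map_one]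
        have hTP2 : IsTP (B₁.map π₂) := ih b hblt (by omega) _ hdet2
        obtain ⟨P₂, B₂, hPB₂, hP₂, hB₂map, hB₂det, hextra⟩ := lift_factor π₂
          (fun s => (((Nat.chineseRemainder hco 0 s.val : ℕ)) : ZMod m))
          (fun s => by
            rw [map_natCast]
            have hmod := (Nat.chineseRemainder hco 0 s.val).2.2
            rw [(ZMod.natCast_eq_natCast_iff _ _ _).mpr hmod, ZMod.natCast_zmod_val])
          B₁ hTP2
        have hkill : ∀ s : ZMod b, π₁ ((((Nat.chineseRemainder hco 0 s.val : ℕ)) : ZMod m)) = 0 := by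
          intro s
          rw [map_natCast]
          have hmod := (Nat.chineseRemainder hco 0 s.val).2.1
          have := (ZMod.natCast_eq_natCast_iff _ _ _).mpr hmod
          simpa using this
        obtain ⟨hP₂π₁, hB₂π₁⟩ := hextra _ π₁ hkill
        rw [hB₁map] at hB₂π₁
        -- B₂ = 1
        have hB₂one : B₂ = 1 := by
          ext x y
          have hz1 := entry_sub_one_map_zero π₁ B₂ hB₂π₁ x y
          have hz2 := entry_sub_one_map_zero π₂ B₂ hB₂map x y
          have hd1 := zmod_dvd_val_of_cast_eq_zero hadvd _ hz1
          have hd2 := zmod_dvd_val_of_cast_eq_zero hbdvd _ hz2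
          have hdm : m ∣ (B₂ x y - (1 : Matrix n n (ZMod m)) x y).val := by
            have h := Nat.Coprime.mul_dvd_of_dvd_of_dvd hco hd1 hd2
            rwa [hab] at h
          have hz : B₂ x y - (1 : Matrix n n (ZMod m)) x y = 0 := by
            have := (ZMod.natCast_eq_zero_iff _ _).mpr hdm
            rwa [ZMod.natCast_zmod_val] at this
          exact sub_eq_zero.mp hz
        rw [hPB₁, hPB₂, hB₂one, Matrix.mul_one]
        exact hP₁.mul hP₂

end SLlift




/-- `δ_H(m)`: the index of `φ_m(H)` in `SL(n, ℤ/mℤ)`. -/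
noncomputable def deltaH (n : ℕ) (H : Subgroup (Matrix.SpecialLinearGroup (Fin n) ℤ)) (m : ℕ) : ℕ :=
  (Subgroup.map (SLmod n m) H).index

open Matrix Matrix.TransvectionStruct in
lemma SLmod_surjective (N m : ℕ) (hm : 1 ≤ m) : Function.Surjective (SLmod N m) := by
  intro A
  haveI : NeZero m := ⟨by omega⟩
  obtain ⟨L, hL⟩ := SLlift.isTP_zmod m hm (A : Matrix (Fin N) (Fin N) (ZMod m)) A.property
  set L' : List (TransvectionStruct (Fin N) ℤ) :=
    L.map (fun t => ⟨t.i, t.j, t.hij, (t.c.val : ℤ)⟩) with hL'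
  set B : Matrix (Fin N) (Fin N) ℤ := (L'.map toMatrix).prod with hB
  have hdet : B.det = 1 := SLlift.IsTP.det ⟨L', rfl⟩
  refine ⟨⟨B, hdet⟩, ?_⟩
  apply Subtype.ext
  show (Int.castRingHom (ZMod m)).mapMatrix B = (A : Matrix (Fin N) (Fin N) (ZMod m))
  rw [RingHom.mapMatrix_apply]
  have h1 : L'.map (SLlift.TSmap (Int.castRingHom (ZMod m))) = L := by
    rw [hL', List.map_map]
    have h2 : (SLlift.TSmap (Int.castRingHom (ZMod m)) ∘
        fun t : TransvectionStruct (Fin N) (ZMod m) =>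
          (⟨t.i, t.j, t.hij, (t.c.val : ℤ)⟩ : TransvectionStruct (Fin N) ℤ)) = id := by
      funext t; rcases t with ⟨i, j, hij, c⟩
      simp only [SLlift.TSmap, Function.comp_apply, id_eq]
      congr 1
      show (((c.val : ℤ)) : ZMod m) = c
      rw [Int.cast_natCast]
      exact ZMod.natCast_zmod_val c
    rw [h2, List.map_id]
  calc B.map (Int.castRingHom (ZMod m))
      = ((L'.map (SLlift.TSmap (Int.castRingHom (ZMod m)))).map toMatrix).prod :=
        (SLlift.prod_map _ L').symm
    _ = (L.map toMatrix).prod := by rw [h1]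
    _ = A := hL.symm

lemma SLmod_comp (N : ℕ) {m m' : ℕ} (h : m ∣ m') :
    SLmod N m = (Matrix.SpecialLinearGroup.map (ZMod.castHom h (ZMod m))).comp (SLmod N m') := by
  refine MonoidHom.ext fun A => Subtype.ext ?_
  show (Int.castRingHom (ZMod m)).mapMatrix A.1
      = (ZMod.castHom h (ZMod m)).mapMatrix ((Int.castRingHom (ZMod m')).mapMatrix A.1)
  rw [RingHom.mapMatrix_apply, RingHom.mapMatrix_apply, RingHom.mapMatrix_apply, Matrix.map_map]
  have h2 : (ZMod.castHom h (ZMod m)).comp (Int.castRingHom (ZMod m')) =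
      Int.castRingHom (ZMod m) := Subsingleton.elim _ _
  rw [← RingHom.coe_comp, h2]


/-- Basic properties of `δ_H`: (a) `m ∣ m'` implies `δ_H(m) ∣ δ_H(m')`;
(b) if `H` has level `M` then `δ_H(M) = |SL(n,ℤ) : H|`, `δ_H(m) ∣ δ_H(M)` for all `m`,
and `δ_H(m) = δ_H(M)` iff `M ∣ m`. -/
theorem stmt15 (n : ℕ) (hn : 2 < n) (H : Subgroup (Matrix.SpecialLinearGroup (Fin n) ℤ)) :
    (∀ m m' : ℕ, 0 < m → 0 < m' → m ∣ m' → deltaH n H m ∣ deltaH n H m') ∧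
    (∀ M : ℕ, 1 ≤ M → (SLmod n M).ker ≤ H →
      (∀ m : ℕ, 1 ≤ m → (SLmod n m).ker ≤ H → M ∣ m) →
      deltaH n H M = H.index ∧
        ∀ m : ℕ, 1 ≤ m →
          (deltaH n H m ∣ deltaH n H M ∧ (deltaH n H m = deltaH n H M ↔ M ∣ m))) := by
  have hsurj : ∀ m : ℕ, 1 ≤ m → Function.Surjective (SLmod n m) :=
    fun m hm => SLmod_surjective n m hm
  have parta : ∀ m m' : ℕ, 0 < m → 0 < m' → m ∣ m' → deltaH n H m ∣ deltaH n H m' := by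
    intro m m' hm hm' hdvd
    have hcomp := SLmod_comp n hdvd
    set g : Matrix.SpecialLinearGroup (Fin n) (ZMod m') →* Matrix.SpecialLinearGroup (Fin n) (ZMod m) :=
      Matrix.SpecialLinearGroup.map (ZMod.castHom hdvd (ZMod m)) with hg
    have hgs : Function.Surjective g := by
      have hs := hsurj m hm
      rw [hcomp] at hs
      exact Function.Surjective.of_comp hs
    have hmap : Subgroup.map (SLmod n m) H = Subgroup.map g (Subgroup.map (SLmod n m') H) := by
      rw [Subgroup.map_map, ← hcomp]
    rw [deltaH, deltaH, hmap]
    exact Subgroup.index_map_dvd _ hgs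
  have kermono : ∀ {d d' : ℕ} (h : d ∣ d'), (SLmod n d').ker ≤ (SLmod n d).ker := by
    intro d d' h x hx
    rw [MonoidHom.mem_ker] at hx ⊢
    rw [SLmod_comp n h, MonoidHom.comp_apply, hx, map_one]
  refine ⟨parta, ?_⟩
  intro M hM hker hmin
  haveI : NeZero M := ⟨by omega⟩
  have key : ∀ m : ℕ, 1 ≤ m → (SLmod n m).ker ≤ H → deltaH n H m = H.index :=
    fun m hm hk => Subgroup.index_map_eq H (hsurj m hm) hk
  have hKM : deltaH n H M = H.index := key M hM hker
  have hMfin : H.index ≠ 0 := by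
    have hdvd1 : H.index ∣ (SLmod n M).ker.index := Subgroup.index_dvd_of_le hker
    have hk0 : (SLmod n M).ker.index ≠ 0 := by
      rw [Subgroup.index_ker]
      haveI hfin : Finite (Matrix.SpecialLinearGroup (Fin n) (ZMod M)) := by infer_instance
      have hpos : 0 < Nat.card (SLmod n M).range := Nat.card_pos
      omega
    intro h0
    rw [h0, zero_dvd_iff] at hdvd1
    exact hk0 hdvd1
  refine ⟨hKM, ?_⟩
  intro m hm
  have hdvdpart : deltaH n H m ∣ deltaH n H M := by
    have hL : deltaH n H (m * M) = H.index :=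
      key (m * M) (Nat.mul_pos hm hM) ((kermono (dvd_mul_left M m)).trans hker)
    rw [hKM, ← hL]
    exact parta m (m * M) (by omega) (Nat.mul_pos hm hM) (dvd_mul_right m M)
  refine ⟨hdvdpart, ?_, ?_⟩
  · intro heq
    have hδm : deltaH n H m = H.index := by rw [heq, hKM]
    set H' := Subgroup.comap (SLmod n m) (Subgroup.map (SLmod n m) H) with hH'
    have hle : H ≤ H' := Subgroup.le_comap_map _ H
    have hidx : H'.index = deltaH n H m :=
      Subgroup.index_comap_of_surjective _ (hsurj m hm)
    have hrel : H.relIndex H' * H'.index = H.index := Subgroup.relIndex_mul_index hle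
    rw [hidx, hδm] at hrel
    have h1 : H.relIndex H' = 1 :=
      mul_right_cancel₀ hMfin (hrel.trans (one_mul H.index).symm)
    have hH'le : H' ≤ H := Subgroup.relIndex_eq_one.mp h1
    have hkerm : (SLmod n m).ker ≤ H := by
      refine le_trans ?_ hH'le
      intro x hx
      rw [MonoidHom.mem_ker] at hx
      rw [hH', Subgroup.mem_comap, hx]
      exact Subgroup.one_mem _
    exact hmin m hm hkerm
  · intro hMm
    rw [key m hm ((kermono hMm).trans hker), hKM]
end
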